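/- arXiv:1110.4938 — 6 statements merged into one kernel-verified Lean document; each statement's English description precedes it below -/
import Mathlib

section
/- For every β ∈ ℂ with |β| < 1 and every z in the open unit disc 𝔻, one has Kμ(z) − z·conj(β)·K(ξ̄μ)(z) ≠ 0 and the characteristic function of Û_β satisfies θ_β(z) = −β + z(1 − |β|²) · K(ξ̄μ)(z) / (Kμ(z) − z·conj(β)·K(ξ̄μ)(z)). -/
open MeasureTheory Filter ContinuousLinearMap
open scoped ENNReal Topology ComplexConjugate

noncomputable section

/-- The Cauchy transform `K(fτ)(z) = ∫ f(ξ)/(1 - conj(ξ) z) dτ(ξ)` of the measure `fτ`. -/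
def cauchyT (τ : Measure ℂ) (f : ℂ → ℂ) (z : ℂ) : ℂ :=
  ∫ ξ, f ξ / (1 - conj ξ * z) ∂τ

/-- The function `ξ ↦ conj ξ`. -/
def xibarFun : ℂ → ℂ := fun ξ => conj ξ

/-- The constant function `1`. -/
def oneFun : ℂ → ℂ := fun _ => 1

/-- The operator `Û_γ = M_ξ + (γ - 1)⟨·, ξ̄⟩1` on `L²(μ)`, where `Mxi` is multiplication by
the independent variable, `xibar` is the function `ξ ↦ conj ξ` and `one` is the constant
function `1`.  (Here `⟨f, ξ̄⟩ = ∫ f(ξ) ξ dμ(ξ)` is linear in `f`.) -/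
def clarkOp (μ : Measure ℂ) (Mxi : Lp ℂ 2 μ →L[ℂ] Lp ℂ 2 μ) (xibar one : Lp ℂ 2 μ)
    (γ : ℂ) : Lp ℂ 2 μ →L[ℂ] Lp ℂ 2 μ :=
  Mxi + (γ - 1) • ((innerSL ℂ xibar).smulRight one)

/-- The scalar characteristic function
`θ(z) = ⟨(-U + z D₊ (I - z U*)⁻¹ D) ξ̄, 1⟩` of a contraction `U` on `L²(μ)` with defect
operators `Dm = (I - U*U)^{1/2}` and `Ds = (I - U U*)^{1/2}`. -/
def charF {μ : Measure ℂ} (U Dm Ds : Lp ℂ 2 μ →L[ℂ] Lp ℂ 2 μ) (xibar one : Lp ℂ 2 μ)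
    (z : ℂ) : ℂ :=
  inner ℂ one ((-U + z • (Ds ∘L Ring.inverse (1 - z • ContinuousLinearMap.adjoint U) ∘L Dm))
    xibar)

/-- `T^{(k)}`: nonnegative powers of `T`; powers of the adjoint for negative `k`. -/
def zpowOp {E : Type*} [NormedAddCommGroup E] [InnerProductSpace ℂ E] [CompleteSpace E]
    (T : E →L[ℂ] E) (k : ℤ) : E →L[ℂ] E :=
  if 0 ≤ k then T ^ k.toNat else (ContinuousLinearMap.adjoint T) ^ (-k).toNat

/-- Normalized Lebesgue (arclength) measure on the unit circle `𝕋`, as a measure on `ℂ`. -/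
def mCircle : Measure ℂ :=
  (ENNReal.ofReal (2 * Real.pi))⁻¹ •
    (volume.restrict (Set.Ioc (0:ℝ) (2 * Real.pi))).map (circleMap 0 1)

/-- A function on the disc is *inner* if its radial limits exist and have modulus one at
`m`-almost every point of the unit circle. -/
def IsInnerFun (f : ℂ → ℂ) : Prop :=
  ∀ᵐ ξ ∂mCircle, ∃ L : ℂ,
    Tendsto (fun r : ℝ => f ((r : ℂ) * ξ)) (𝓝[<] (1:ℝ)) (𝓝 L) ∧ ‖L‖ = 1

lemma pos_sqrt_eig {E : Type*} [NormedAddCommGroup E] [InnerProductSpace ℂ E] [CompleteSpace E]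
    {T : E →L[ℂ] E} (hT : T.IsPositive) {s : ℝ} (hs : 0 < s) {x : E}
    (h : T (T x) = (((s : ℂ)) * (s : ℂ)) • x) : T x = ((s : ℝ) : ℂ) • x := by
  set y := T x - (s : ℂ) • x with hy
  have hTy : T y = -((s : ℂ) • y) := by
    rw [hy, map_sub, ContinuousLinearMap.map_smul, h]
    module
  have h0 : (0:ℝ) ≤ RCLike.re (inner ℂ (T y) y : ℂ) := hT.2 y
  rw [hTy, inner_neg_left, inner_smul_left, inner_self_eq_norm_sq_to_K,
    Complex.conj_ofReal] at h0
  have h0' : (0:ℝ) ≤ -(s * ‖y‖^2) := by simpa [← Complex.ofReal_pow] using h0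
  have : y = 0 := by
    by_contra hne
    have hpos : 0 < ‖y‖ := norm_pos_iff.mpr hne
    nlinarith [h0', mul_pos hs (pow_pos hpos 2)]
  rw [hy] at this
  have := sub_eq_zero.mp this
  simpa using this

lemma adjoint_rankOne {E : Type*} [NormedAddCommGroup E] [InnerProductSpace ℂ E] [CompleteSpace E]
    (x y : E) : ContinuousLinearMap.adjoint ((innerSL ℂ x).smulRight y)
      = (innerSL ℂ y).smulRight x := by
  symm
  rw [ContinuousLinearMap.eq_adjoint_iff]
  intro u v
  simp only [ContinuousLinearMap.smulRight_apply, innerSL_apply_apply, inner_smul_left,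
    inner_smul_right, inner_conj_symm]
  ring

set_option maxHeartbeats 2000000

theorem statement3
    (μ : Measure ℂ) [IsProbabilityMeasure μ] (hμ : μ (Metric.sphere (0:ℂ) 1)ᶜ = 0)
    (Mxi : Lp ℂ 2 μ →L[ℂ] Lp ℂ 2 μ)
    (hMxi : ∀ f : Lp ℂ 2 μ, ∀ᵐ ξ ∂μ, (Mxi f) ξ = ξ * f ξ)
    (one xibar : Lp ℂ 2 μ)
    (hone : ∀ᵐ ξ ∂μ, one ξ = 1) (hxibar : ∀ᵐ ξ ∂μ, xibar ξ = conj ξ)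
    (β : ℂ) (hβ : ‖β‖ < 1)
    -- `Dβ` and `Dsβ` are the positive square roots of `I - Û_β* Û_β` and `I - Û_β Û_β*`
    (Dβ Dsβ : Lp ℂ 2 μ →L[ℂ] Lp ℂ 2 μ)
    (hDβpos : Dβ.IsPositive)
    (hDβ : Dβ ∘L Dβ = 1 - ContinuousLinearMap.adjoint (clarkOp μ Mxi xibar one β) ∘L
      clarkOp μ Mxi xibar one β)
    (hDsβpos : Dsβ.IsPositive)
    (hDsβ : Dsβ ∘L Dsβ = 1 - clarkOp μ Mxi xibar one β ∘L
      ContinuousLinearMap.adjoint (clarkOp μ Mxi xibar one β))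
    (z : ℂ) (hz : ‖z‖ < 1) :
    cauchyT μ oneFun z - z * conj β * cauchyT μ xibarFun z ≠ 0 ∧
    charF (clarkOp μ Mxi xibar one β) Dβ Dsβ xibar one z =
      -β + z * (1 - (‖β‖ : ℂ) ^ 2) * cauchyT μ xibarFun z /
        (cauchyT μ oneFun z - z * conj β * cauchyT μ xibarFun z) := by
  classical
  set U := clarkOp μ Mxi xibar one β with hU
  set Ua := ContinuousLinearMap.adjoint U with hUadef
  -- a.e. facts
  have habs : ∀ᵐ ξ ∂μ, ‖ξ‖ = 1 := by
    rw [ae_iff]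
    convert hμ using 2
    ext ξ
    simp [Metric.mem_sphere, Complex.dist_eq]
  have hunit : ∀ᵐ ξ ∂μ, ξ * conj ξ = 1 := by
    filter_upwards [habs] with ξ h
    rw [Complex.mul_conj, Complex.normSq_eq_norm_sq, h]
    norm_num
  -- inner ℂ products via representatives
  have hinner : ∀ (f g : Lp ℂ 2 μ) (f' g' : ℂ → ℂ), (⇑f =ᵐ[μ] f') → (⇑g =ᵐ[μ] g') →
      (inner ℂ f g : ℂ) = ∫ ξ, conj (f' ξ) * g' ξ ∂μ := by
    intro f g f' g' hf hg
    rw [MeasureTheory.L2.inner_def]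
    refine integral_congr_ae ?_
    filter_upwards [hf, hg] with ξ h1 h2
    simp [RCLike.inner_apply, h1, h2, mul_comm]
  have hinner_one_one : (inner ℂ one one : ℂ) = 1 := by
    rw [hinner one one _ _ hone hone]
    simp
  have hinner_xx : (inner ℂ xibar xibar : ℂ) = 1 := by
    rw [hinner xibar xibar _ _ hxibar hxibar]
    have : ∀ᵐ ξ ∂μ, conj (conj ξ) * conj ξ = 1 := by
      filter_upwards [hunit] with ξ h
      simpa using h
    rw [integral_congr_ae this]
    simp
  -- MemLp of ξ̄ ⬝ f
  have hmemk : ∀ f : Lp ℂ 2 μ, MemLp (fun ξ => conj ξ * f ξ) 2 μ := by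
    intro f
    refine MemLp.of_le (Lp.memLp f) (AEStronglyMeasurable.mul ?_ (Lp.aestronglyMeasurable f)) ?_
    · exact Complex.continuous_conj.aestronglyMeasurable
    · filter_upwards [habs] with ξ h
      simp [Complex.norm_conj, h]
  -- the adjoint of Mxi acts as multiplication by ξ̄
  have hMxiA : ∀ f : Lp ℂ 2 μ,
      ⇑(ContinuousLinearMap.adjoint Mxi f) =ᵐ[μ] fun ξ => conj ξ * f ξ := by
    intro f
    set k : Lp ℂ 2 μ := (hmemk f).toLp _ with hk
    have hkco : ⇑k =ᵐ[μ] fun ξ => conj ξ * f ξ := MemLp.coeFn_toLp _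
    have key : ∀ g : Lp ℂ 2 μ, (inner ℂ (ContinuousLinearMap.adjoint Mxi f - k) g : ℂ) = 0 := by
      intro g
      rw [inner_sub_left]
      have h1 : (inner ℂ (ContinuousLinearMap.adjoint Mxi f) g : ℂ) = inner ℂ f (Mxi g) :=
        ContinuousLinearMap.adjoint_inner_left Mxi g f
      rw [h1, hinner f (Mxi g) _ (fun ξ => ξ * g ξ) (EventuallyEq.refl _ _) (hMxi g),
        hinner k g _ (⇑g) hkco (EventuallyEq.refl _ _), sub_eq_zero]
      refine integral_congr_ae (Eventually.of_forall fun ξ => ?_)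
      simp only [map_mul, Complex.conj_conj]
      ring
    have h0 := key (ContinuousLinearMap.adjoint Mxi f - k)
    rw [inner_self_eq_zero, sub_eq_zero] at h0
    exact h0 ▸ hkco
  -- adjoint of the Clark operator
  have hUadj : Ua = ContinuousLinearMap.adjoint Mxi
      + (conj (β - 1)) • ((innerSL ℂ one).smulRight xibar) := by
    rw [hUadef, hU, clarkOp, map_add, LinearIsometryEquiv.map_smulₛₗ, adjoint_rankOne]
  have hUapp : ∀ f, U f = Mxi f + ((β - 1) * (inner ℂ xibar f : ℂ)) • one := by
    intro f
    rw [hU]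
    simp [clarkOp, smul_smul]
  have hUaapp : ∀ f, Ua f = ContinuousLinearMap.adjoint Mxi f
      + (conj (β - 1) * (inner ℂ one f : ℂ)) • xibar := by
    intro f
    rw [hUadj]
    simp [smul_smul]
  -- action on the special vectors
  have hMxi_xibar : Mxi xibar = one := by
    apply Lp.ext
    filter_upwards [hMxi xibar, hxibar, hone, hunit] with ξ h1 h2 h3 h4
    rw [h1, h2, h3, h4]
  have hUxibar : U xibar = β • one := by
    rw [hUapp, hMxi_xibar, hinner_xx, mul_one]
    module
  have hMxiA_one : ContinuousLinearMap.adjoint Mxi one = xibar := by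
    apply Lp.ext
    filter_upwards [hMxiA one, hone, hxibar] with ξ h1 h2 h3
    rw [h1, h2, h3, mul_one]
  have hUa_one : Ua one = conj β • xibar := by
    rw [hUaapp, hMxiA_one, hinner_one_one, mul_one, map_sub, map_one]
    module
  -- the positive square roots on the special vectors
  set s : ℝ := Real.sqrt (1 - (‖β‖)^2) with hsdef
  have habs2 : (‖β‖)^2 < 1 := by
    nlinarith [norm_nonneg β]
  have hs : 0 < s := Real.sqrt_pos.mpr (by linarith)
  have hs2r : s^2 = 1 - (‖β‖)^2 :=
    Real.sq_sqrt (by nlinarith : (0:ℝ) ≤ 1 - (‖β‖)^2)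
  have hs2 : (s:ℂ) * (s:ℂ) = 1 - ((‖β‖ : ℂ))^2 := by
    rw [← Complex.ofReal_mul, ← sq, hs2r]
    push_cast
    ring
  have hbb : β * conj β = ((‖β‖ : ℂ))^2 := by
    rw [Complex.mul_conj, Complex.normSq_eq_norm_sq]
    push_cast
    ring
  have hDβx : Dβ xibar = (s:ℂ) • xibar := by
    refine pos_sqrt_eig hDβpos hs ?_
    have h1 := congrArg (fun T : Lp ℂ 2 μ →L[ℂ] Lp ℂ 2 μ => T xibar) hDβ
    simp only [ContinuousLinearMap.comp_apply, ContinuousLinearMap.sub_apply,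
      ContinuousLinearMap.one_apply] at h1
    rw [h1, hUxibar, ContinuousLinearMap.map_smul, hUa_one, hs2, smul_smul, hbb]
    module
  have hDsβone : Dsβ one = (s:ℂ) • one := by
    refine pos_sqrt_eig hDsβpos hs ?_
    have h1 := congrArg (fun T : Lp ℂ 2 μ →L[ℂ] Lp ℂ 2 μ => T one) hDsβ
    simp only [ContinuousLinearMap.comp_apply, ContinuousLinearMap.sub_apply,
      ContinuousLinearMap.one_apply] at h1
    rw [h1, hUa_one, ContinuousLinearMap.map_smul, hUxibar, hs2, smul_smul, mul_comm ((starRingEnd ℂ) β) β, hbb]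
    module
  -- U is a contraction
  have hDsa : ContinuousLinearMap.adjoint Dβ = Dβ := isSelfAdjoint_iff'.mp hDβpos.isSelfAdjoint
  have hDssa : ContinuousLinearMap.adjoint Dsβ = Dsβ := isSelfAdjoint_iff'.mp hDsβpos.isSelfAdjoint
  have hUnorm : ‖U‖ ≤ 1 := by
    refine ContinuousLinearMap.opNorm_le_bound U zero_le_one fun f => ?_
    rw [one_mul]
    have e1 : (inner ℂ (U f) (U f) : ℂ) = inner ℂ f f - inner ℂ (Dβ f) (Dβ f) := by
      have e2 : (inner ℂ (U f) (U f) : ℂ) = inner ℂ (Ua (U f)) f :=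
        (ContinuousLinearMap.adjoint_inner_left U f (U f)).symm
      have e3 : Ua (U f) = f - Dβ (Dβ f) := by
        have h1 := congrArg (fun T : Lp ℂ 2 μ →L[ℂ] Lp ℂ 2 μ => T f) hDβ
        simp only [ContinuousLinearMap.comp_apply, ContinuousLinearMap.sub_apply,
          ContinuousLinearMap.one_apply] at h1
        rw [eq_sub_iff_add_eq, h1]
        abel
      have e4 : (inner ℂ (Dβ (Dβ f)) f : ℂ) = inner ℂ (Dβ f) (Dβ f) := by
        have h5 := ContinuousLinearMap.adjoint_inner_left Dβ f (Dβ f)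
        rwa [hDsa] at h5
      rw [e2, e3, inner_sub_left, e4]
    have e5 : ‖U f‖^2 ≤ ‖f‖^2 := by
      have h1 := congrArg Complex.re e1
      rw [Complex.sub_re] at h1
      have r1 : (inner ℂ (U f) (U f) : ℂ).re = ‖U f‖^2 := by
        rw [inner_self_eq_norm_sq_to_K (𝕜 := ℂ)]
        norm_cast
      have r2 : (inner ℂ f f : ℂ).re = ‖f‖^2 := by
        rw [inner_self_eq_norm_sq_to_K (𝕜 := ℂ)]
        norm_cast
      have r3 : (inner ℂ (Dβ f) (Dβ f) : ℂ).re = ‖Dβ f‖^2 := by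
        rw [inner_self_eq_norm_sq_to_K (𝕜 := ℂ)]
        norm_cast
      rw [r1, r2, r3] at h1
      nlinarith [sq_nonneg ‖Dβ f‖]
    nlinarith [norm_nonneg (U f), norm_nonneg f]
  have hznorm : ‖z • Ua‖ < 1 := by
    rw [norm_smul]
    have hUa1 : ‖Ua‖ ≤ 1 := by
      rw [hUadef]
      calc ‖ContinuousLinearMap.adjoint U‖ = ‖U‖ :=
        LinearIsometryEquiv.norm_map ContinuousLinearMap.adjoint U
      _ ≤ 1 := hUnorm
    have hzn : ‖z‖ < 1 := hz
    calc ‖z‖ * ‖Ua‖ ≤ ‖z‖ * 1 := by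
          exact mul_le_mul_of_nonneg_left hUa1 (norm_nonneg z)
      _ < 1 := by rwa [mul_one]
  -- the unit 1 - z • Ua
  set u : (Lp ℂ 2 μ →L[ℂ] Lp ℂ 2 μ)ˣ := Units.oneSub (z • Ua) hznorm with hudef
  have hinvB : Ring.inverse ((1:Lp ℂ 2 μ →L[ℂ] Lp ℂ 2 μ) - z • Ua) = ↑u⁻¹ :=
    NormedRing.inverse_one_sub _ hznorm
  -- the explicit solution w0
  set g0 : ℂ → ℂ := fun ξ => conj ξ / (1 - conj ξ * z) with hg0def
  have hzlt : 0 < 1 - ‖z‖ := by linarith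
  have hden : ∀ᵐ ξ ∂μ, 1 - ‖z‖ ≤ ‖1 - conj ξ * z‖ := by
    filter_upwards [habs] with ξ h
    have h2 : ‖conj ξ * z‖ = ‖z‖ := by
      rw [norm_mul, Complex.norm_conj, h, one_mul]
    calc 1 - ‖z‖ = ‖(1:ℂ)‖ - ‖conj ξ * z‖ := by
          rw [norm_one, h2]
      _ ≤ ‖1 - conj ξ * z‖ := by
          simpa using norm_sub_norm_le (1:ℂ) (conj ξ * z)
  have hdenne : ∀ᵐ ξ ∂μ, (1 - conj ξ * z) ≠ 0 := by
    filter_upwards [hden] with ξ h h0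
    rw [h0] at h
    simp only [norm_zero] at h
    linarith
  have hg0meas : AEStronglyMeasurable g0 μ := by
    refine (Measurable.aestronglyMeasurable ?_)
    exact (Complex.continuous_conj.measurable).div
      (measurable_const.sub ((Complex.continuous_conj.measurable).mul_const z))
  have hg0mem : MemLp g0 2 μ := by
    refine MemLp.of_bound hg0meas ((1 - ‖z‖)⁻¹) ?_
    filter_upwards [habs, hden] with ξ h1 h2
    rw [hg0def]
    simp only [norm_div, Complex.norm_conj, h1]
    calc (1:ℝ) / ‖1 - conj ξ * z‖ ≤ 1 / (1 - ‖z‖) :=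
          one_div_le_one_div_of_le hzlt h2
      _ = (1 - ‖z‖)⁻¹ := one_div _
  set w0 : Lp ℂ 2 μ := hg0mem.toLp g0 with hw0def
  have hw0 : ⇑w0 =ᵐ[μ] g0 := MemLp.coeFn_toLp _
  have hinner_one_w0 : (inner ℂ one w0 : ℂ) = cauchyT μ xibarFun z := by
    rw [hinner one w0 _ g0 hone hw0, cauchyT]
    refine integral_congr_ae (Eventually.of_forall fun ξ => ?_)
    simp [hg0def, xibarFun]
  -- integrability of the kernels
  have hker1mem : MemLp (fun ξ => oneFun ξ / (1 - conj ξ * z)) 1 μ := by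
    refine MemLp.of_bound ?_ ((1 - ‖z‖)⁻¹) ?_
    · refine Measurable.aestronglyMeasurable ?_
      exact measurable_const.div
        (measurable_const.sub ((Complex.continuous_conj.measurable).mul_const z))
    · filter_upwards [hden] with ξ h2
      simp only [oneFun, norm_div, norm_one]
      calc (1:ℝ) / ‖1 - conj ξ * z‖ ≤ 1 / (1 - ‖z‖) :=
            one_div_le_one_div_of_le hzlt h2
        _ = (1 - ‖z‖)⁻¹ := one_div _
  have hint1 : Integrable (fun ξ => oneFun ξ / (1 - conj ξ * z)) μ :=
    memLp_one_iff_integrable.mp hker1mem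
  have hg0mem1 : MemLp g0 1 μ := by
    refine MemLp.of_bound hg0meas ((1 - ‖z‖)⁻¹) ?_
    filter_upwards [habs, hden] with ξ h1 h2
    rw [hg0def]
    simp only [norm_div, Complex.norm_conj, h1]
    calc (1:ℝ) / ‖1 - conj ξ * z‖ ≤ 1 / (1 - ‖z‖) :=
          one_div_le_one_div_of_le hzlt h2
      _ = (1 - ‖z‖)⁻¹ := one_div _
  have hint2 : Integrable g0 μ := memLp_one_iff_integrable.mp hg0mem1
  have hK0 : cauchyT μ oneFun z = 1 + z * cauchyT μ xibarFun z := by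
    have hae : (fun ξ => oneFun ξ / (1 - conj ξ * z))
        =ᵐ[μ] fun ξ => 1 + z * (xibarFun ξ / (1 - conj ξ * z)) := by
      filter_upwards [hdenne] with ξ hne
      simp only [oneFun, xibarFun]
      field_simp
      ring
    rw [cauchyT, cauchyT, integral_congr_ae hae, integral_add (integrable_const 1)]
    · rw [integral_const]
      simp only [Measure.real, measure_univ, ENNReal.toReal_one, one_smul]
      rw [integral_const_mul]
    · have : (fun ξ => z * (xibarFun ξ / (1 - conj ξ * z))) = fun ξ => z * g0 ξ := by
        funext ξ
        simp [hg0def, xibarFun]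
      rw [this]
      exact hint2.const_mul z
  set K1 : ℂ := cauchyT μ xibarFun z with hK1def
  set D : ℂ := cauchyT μ oneFun z - z * conj β * K1 with hDdef
  have huval : (↑u : Lp ℂ 2 μ →L[ℂ] Lp ℂ 2 μ) = 1 - z • Ua := rfl
  have hBw0 : ((1 : Lp ℂ 2 μ →L[ℂ] Lp ℂ 2 μ) - z • Ua) w0 = D • xibar := by
    have h1 : ((1 : Lp ℂ 2 μ →L[ℂ] Lp ℂ 2 μ) - z • Ua) w0 = w0 - z • (Ua w0) := by
      simp [ContinuousLinearMap.sub_apply, ContinuousLinearMap.smul_apply]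
    rw [h1, hUaapp w0, hinner_one_w0]
    apply Lp.ext
    have hc1 := Lp.coeFn_sub w0
      (z • ((ContinuousLinearMap.adjoint Mxi) w0 + (conj (β-1) * K1) • xibar))
    have hc2 := Lp.coeFn_smul z
      ((ContinuousLinearMap.adjoint Mxi) w0 + (conj (β-1) * K1) • xibar)
    have hc3 := Lp.coeFn_add ((ContinuousLinearMap.adjoint Mxi) w0) ((conj (β-1) * K1) • xibar)
    have hc4 := Lp.coeFn_smul (conj (β-1) * K1) xibar
    have hc5 := Lp.coeFn_smul D xibar
    filter_upwards [hc1, hc2, hc3, hc4, hc5, hMxiA w0, hw0, hxibar, hdenne]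
      with ξ e1 e2 e3 e4 e5 e6 e7 e8 hne
    rw [e1, e5]
    simp only [Pi.sub_apply, Pi.smul_apply, smul_eq_mul]
    rw [e2]
    simp only [Pi.smul_apply, smul_eq_mul]
    rw [e3]
    simp only [Pi.add_apply]
    rw [e4]
    simp only [Pi.smul_apply, smul_eq_mul]
    rw [e6, e7, e8, hDdef, hK0, hg0def]
    simp only [map_sub, map_one]
    field_simp
    ring
  have hDne : D ≠ 0 := by
    intro h0
    have h2 : ((↑u⁻¹ * ↑u : Lp ℂ 2 μ →L[ℂ] Lp ℂ 2 μ)) w0 = 0 := by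
      rw [ContinuousLinearMap.mul_apply, huval, hBw0, h0, zero_smul, map_zero]
    rw [Units.inv_mul] at h2
    simp only [ContinuousLinearMap.one_apply] at h2
    have hg00 : g0 =ᵐ[μ] (fun _ => (0:ℂ)) := by
      refine hw0.symm.trans ?_
      rw [h2]
      exact Lp.coeFn_zero ℂ 2 μ
    have hg0ne : ∀ᵐ ξ ∂μ, g0 ξ ≠ 0 := by
      filter_upwards [habs, hdenne] with ξ h1 hne
      have hnum : (starRingEnd ℂ) ξ ≠ 0 := by
        intro hh
        rw [← Complex.norm_conj, hh] at h1
        simp at h1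
      exact div_ne_zero hnum hne
    have hfalse : ∀ᵐ ξ ∂μ, False := by
      filter_upwards [hg00, hg0ne] with ξ ha hb
      exact hb ha
    rw [ae_iff] at hfalse
    simp only [not_false_eq_true, Set.setOf_true] at hfalse
    rw [measure_univ] at hfalse
    exact one_ne_zero hfalse
  have hRinv1 : (↑u⁻¹ : Lp ℂ 2 μ →L[ℂ] Lp ℂ 2 μ) (D • xibar) = w0 := by
    rw [← hBw0, ← huval, ← ContinuousLinearMap.mul_apply, Units.inv_mul,
      ContinuousLinearMap.one_apply]
  have hRinv : (↑u⁻¹ : Lp ℂ 2 μ →L[ℂ] Lp ℂ 2 μ) xibar = D⁻¹ • w0 := by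
    rw [← one_smul ℂ xibar, ← inv_mul_cancel₀ hDne, mul_smul, ContinuousLinearMap.map_smul,
      hRinv1]
  refine ⟨hDne, ?_⟩
  rw [charF, hinvB]
  rw [ContinuousLinearMap.add_apply, ContinuousLinearMap.neg_apply,
    ContinuousLinearMap.smul_apply, ContinuousLinearMap.comp_apply,
    ContinuousLinearMap.comp_apply, hUxibar, hDβx, ContinuousLinearMap.map_smul, hRinv,
    ContinuousLinearMap.map_smul, ContinuousLinearMap.map_smul]
  rw [inner_add_right, inner_neg_right, inner_smul_right, inner_smul_right, inner_smul_right,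
    inner_smul_right, hinner_one_one]
  have hDs : (inner ℂ one (Dsβ w0) : ℂ) = (s:ℂ) * K1 := by
    have h5 := ContinuousLinearMap.adjoint_inner_left Dsβ w0 one
    rw [hDssa, hDsβone, inner_smul_left, Complex.conj_ofReal] at h5
    rw [← h5, hinner_one_w0]
  rw [hDs, ← hs2]
  field_simp


end
end

section
/- (Livsic relation) For every β ∈ ℂ with |β| < 1 and every z in the open unit disc 𝔻, the characteristic functions satisfy θ_β(z)·(1 − conj(β)·θ(z)) = θ(z) − β, i.e. θ_β is the linear fractional transform (−β + θ)/(1 − conj(β)θ) of θ. Consequently, θ_β is inner if and only if θ is inner. -/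
open MeasureTheory Filter ContinuousLinearMap
open scoped ENNReal Topology ComplexConjugate

noncomputable section

variable {μ : Measure ℂ} [IsProbabilityMeasure μ]


lemma ae_circle (hμ : μ (Metric.sphere (0:ℂ) 1)ᶜ = 0) : ∀ᵐ ξ ∂μ, ξ * conj ξ = 1 := by
  have h : ∀ᵐ ξ ∂μ, ξ ∈ Metric.sphere (0:ℂ) 1 := by
    rw [ae_iff]
    have : {a : ℂ | ¬ a ∈ Metric.sphere (0:ℂ) 1} = (Metric.sphere (0:ℂ) 1)ᶜ := rfl
    rw [this, hμ]
  filter_upwards [h] with ξ hξ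
  have h1 : ‖ξ‖ = 1 := by simpa using hξ
  rw [Complex.mul_conj, Complex.normSq_eq_norm_sq, h1]
  norm_num

lemma inner_L2 (f g : Lp ℂ 2 μ) : (inner ℂ f g : ℂ) = ∫ a, conj (f a) * g a ∂μ := by
  rw [MeasureTheory.L2.inner_def]
  simp only [RCLike.inner_apply']

lemma inner_one_one (one : Lp ℂ 2 μ) (hone : ∀ᵐ ξ ∂μ, one ξ = 1) :
    (inner ℂ one one : ℂ) = 1 := by
  rw [inner_L2,
    integral_congr_ae (g := fun _ => (1:ℂ)) (by filter_upwards [hone] with ξ h; simp [h])]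
  simp

lemma inner_xibar_xibar (hμ : μ (Metric.sphere (0:ℂ) 1)ᶜ = 0) (xibar : Lp ℂ 2 μ)
    (hxibar : ∀ᵐ ξ ∂μ, xibar ξ = conj ξ) : (inner ℂ xibar xibar : ℂ) = 1 := by
  rw [inner_L2,
    integral_congr_ae (g := fun _ => (1:ℂ)) (by
      filter_upwards [hxibar, ae_circle hμ] with ξ h h1
      simp only [h, Complex.conj_conj]
      exact h1)]
  simp

lemma Mxi_xibar (hμ : μ (Metric.sphere (0:ℂ) 1)ᶜ = 0)
    (Mxi : Lp ℂ 2 μ →L[ℂ] Lp ℂ 2 μ)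
    (hMxi : ∀ f : Lp ℂ 2 μ, ∀ᵐ ξ ∂μ, (Mxi f) ξ = ξ * f ξ)
    (one xibar : Lp ℂ 2 μ)
    (hone : ∀ᵐ ξ ∂μ, one ξ = 1) (hxibar : ∀ᵐ ξ ∂μ, xibar ξ = conj ξ) :
    Mxi xibar = one := by
  apply Lp.ext
  filter_upwards [hMxi xibar, hxibar, hone, ae_circle hμ] with ξ h1 h2 h3 h4
  rw [h1, h2, h3, h4]

lemma inner_one_Mxi (Mxi : Lp ℂ 2 μ →L[ℂ] Lp ℂ 2 μ)
    (hMxi : ∀ f : Lp ℂ 2 μ, ∀ᵐ ξ ∂μ, (Mxi f) ξ = ξ * f ξ)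
    (one xibar : Lp ℂ 2 μ)
    (hone : ∀ᵐ ξ ∂μ, one ξ = 1) (hxibar : ∀ᵐ ξ ∂μ, xibar ξ = conj ξ)
    (f : Lp ℂ 2 μ) : (inner ℂ one (Mxi f) : ℂ) = inner ℂ xibar f := by
  rw [inner_L2, inner_L2]
  apply integral_congr_ae
  filter_upwards [hMxi f, hone, hxibar] with ξ h1 h2 h3
  rw [h1, h2, h3]
  simp [mul_comm]

lemma inner_Mxi_Mxi (hμ : μ (Metric.sphere (0:ℂ) 1)ᶜ = 0)
    (Mxi : Lp ℂ 2 μ →L[ℂ] Lp ℂ 2 μ)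
    (hMxi : ∀ f : Lp ℂ 2 μ, ∀ᵐ ξ ∂μ, (Mxi f) ξ = ξ * f ξ)
    (f g : Lp ℂ 2 μ) : (inner ℂ (Mxi f) (Mxi g) : ℂ) = inner ℂ f g := by
  rw [inner_L2, inner_L2]
  apply integral_congr_ae
  filter_upwards [hMxi f, hMxi g, ae_circle hμ] with ξ h1 h2 h3
  rw [h1, h2]
  simp only [map_mul]
  calc conj ξ * conj (f ξ) * (ξ * g ξ) = (ξ * conj ξ) * (conj (f ξ) * g ξ) := by ring
  _ = conj (f ξ) * g ξ := by rw [h3, one_mul]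

lemma adjoint_Mxi_comp (hμ : μ (Metric.sphere (0:ℂ) 1)ᶜ = 0)
    (Mxi : Lp ℂ 2 μ →L[ℂ] Lp ℂ 2 μ)
    (hMxi : ∀ f : Lp ℂ 2 μ, ∀ᵐ ξ ∂μ, (Mxi f) ξ = ξ * f ξ) :
    ContinuousLinearMap.adjoint Mxi ∘L Mxi = 1 := by
  refine ContinuousLinearMap.ext fun f => ?_
  apply ext_inner_left ℂ
  intro v
  rw [ContinuousLinearMap.comp_apply, ContinuousLinearMap.adjoint_inner_right,
    inner_Mxi_Mxi hμ Mxi hMxi]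
  rfl

lemma Mxi_surjective (hμ : μ (Metric.sphere (0:ℂ) 1)ᶜ = 0)
    (Mxi : Lp ℂ 2 μ →L[ℂ] Lp ℂ 2 μ)
    (hMxi : ∀ f : Lp ℂ 2 μ, ∀ᵐ ξ ∂μ, (Mxi f) ξ = ξ * f ξ) :
    Function.Surjective Mxi := by
  intro y
  have hmes : AEStronglyMeasurable (fun ξ : ℂ => conj ξ * y ξ) μ :=
    (Complex.continuous_conj.aestronglyMeasurable).mul (Lp.aestronglyMeasurable y)
  have hmem : MemLp (fun ξ : ℂ => conj ξ * y ξ) 2 μ := by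
    apply MemLp.mono (Lp.memLp y) hmes
    filter_upwards [ae_circle hμ] with ξ h
    have habs : ‖ξ‖ = 1 := by
      have := congrArg norm h
      rw [norm_mul, Complex.norm_conj, norm_one] at this
      nlinarith [norm_nonneg ξ]
    simp [norm_mul, Complex.norm_conj, habs]
  refine ⟨hmem.toLp _, ?_⟩
  apply Lp.ext
  filter_upwards [hMxi (hmem.toLp _), hmem.coeFn_toLp, ae_circle hμ] with ξ h1 h2 h3
  rw [h1, h2]
  calc ξ * (conj ξ * y ξ) = (ξ * conj ξ) * y ξ := by ring
  _ = y ξ := by rw [h3, one_mul]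

lemma Mxi_comp_adjoint (hμ : μ (Metric.sphere (0:ℂ) 1)ᶜ = 0)
    (Mxi : Lp ℂ 2 μ →L[ℂ] Lp ℂ 2 μ)
    (hMxi : ∀ f : Lp ℂ 2 μ, ∀ᵐ ξ ∂μ, (Mxi f) ξ = ξ * f ξ) :
    Mxi ∘L ContinuousLinearMap.adjoint Mxi = 1 := by
  refine ContinuousLinearMap.ext fun y => ?_
  obtain ⟨x, rfl⟩ := Mxi_surjective hμ Mxi hMxi y
  have h := adjoint_Mxi_comp hμ Mxi hMxi
  have h2 : ContinuousLinearMap.adjoint Mxi (Mxi x) = x := by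
    have := congrFun (congrArg DFunLike.coe h) x
    simpa using this
  simp [h2]

lemma clark_apply (Mxi : Lp ℂ 2 μ →L[ℂ] Lp ℂ 2 μ) (xibar one : Lp ℂ 2 μ) (γ : ℂ)
    (f : Lp ℂ 2 μ) :
    clarkOp μ Mxi xibar one γ f = Mxi f + ((γ - 1) * (inner ℂ xibar f : ℂ)) • one := by
  simp [clarkOp, mul_smul]

lemma adjoint_K (xibar one : Lp ℂ 2 μ) :
    ContinuousLinearMap.adjoint ((innerSL ℂ xibar).smulRight one) =
      (innerSL ℂ one).smulRight xibar := by
  symm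
  rw [eq_adjoint_iff]
  intro x y
  simp only [ContinuousLinearMap.smulRight_apply, innerSL_apply_apply, inner_smul_left,
    inner_smul_right, inner_conj_symm]
  ring

lemma adjoint_clark (Mxi : Lp ℂ 2 μ →L[ℂ] Lp ℂ 2 μ) (xibar one : Lp ℂ 2 μ) (γ : ℂ) :
    ContinuousLinearMap.adjoint (clarkOp μ Mxi xibar one γ) =
      ContinuousLinearMap.adjoint Mxi +
        conj (γ - 1) • ((innerSL ℂ one).smulRight xibar) := by
  rw [clarkOp, map_add, ← adjoint_K xibar one]
  congr 1
  exact ContinuousLinearMap.adjoint.map_smulₛₗ _ _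

section clark
variable (hμ : μ (Metric.sphere (0:ℂ) 1)ᶜ = 0)
    (Mxi : Lp ℂ 2 μ →L[ℂ] Lp ℂ 2 μ)
    (hMxi : ∀ f : Lp ℂ 2 μ, ∀ᵐ ξ ∂μ, (Mxi f) ξ = ξ * f ξ)
    (one xibar : Lp ℂ 2 μ)
    (hone : ∀ᵐ ξ ∂μ, one ξ = 1) (hxibar : ∀ᵐ ξ ∂μ, xibar ξ = conj ξ)

include hμ hMxi hone hxibar

lemma clark_xibar (γ : ℂ) : clarkOp μ Mxi xibar one γ xibar = γ • one := by
  rw [clark_apply, Mxi_xibar hμ Mxi hMxi one xibar hone hxibar,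
    inner_xibar_xibar hμ xibar hxibar]
  rw [mul_one]
  rw [sub_smul, one_smul]
  abel

lemma adjoint_clark_apply (γ : ℂ) (y : Lp ℂ 2 μ) :
    ContinuousLinearMap.adjoint (clarkOp μ Mxi xibar one γ) y =
      ContinuousLinearMap.adjoint Mxi y + (conj (γ - 1) * (inner ℂ one y : ℂ)) • xibar := by
  rw [adjoint_clark]
  simp [mul_smul]

lemma adjoint_Mxi_one : ContinuousLinearMap.adjoint Mxi one = xibar := by
  apply ext_inner_left ℂ
  intro v
  rw [ContinuousLinearMap.adjoint_inner_right]
  rw [← inner_conj_symm, inner_one_Mxi Mxi hMxi one xibar hone hxibar, inner_conj_symm]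

lemma UstarU (γ : ℂ) (f : Lp ℂ 2 μ) :
    ContinuousLinearMap.adjoint (clarkOp μ Mxi xibar one γ)
        (clarkOp μ Mxi xibar one γ f) =
      f - ((1 - γ * conj γ) * (inner ℂ xibar f : ℂ)) • xibar := by
  set c : ℂ := inner ℂ xibar f with hc
  rw [clark_apply, adjoint_clark_apply hμ Mxi hMxi one xibar hone hxibar]
  rw [map_add, ContinuousLinearMap.map_smul, adjoint_Mxi_one hμ Mxi hMxi one xibar hone hxibar]
  have hMM : ContinuousLinearMap.adjoint Mxi (Mxi f) = f := by
    have := congrFun (congrArg DFunLike.coe (adjoint_Mxi_comp hμ Mxi hMxi)) f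
    simpa using this
  rw [hMM]
  have hin : (inner ℂ one (Mxi f + ((γ-1) * c) • one) : ℂ) = c + (γ-1) * c := by
    rw [inner_add_right, inner_smul_right, inner_one_Mxi Mxi hMxi one xibar hone hxibar,
      inner_one_one one hone, ← hc]
    ring
  rw [hin]
  have hco : (starRingEnd ℂ) (γ - 1) * (c + (γ - 1) * c) + (γ - 1) * c
      = -((1 - γ * conj γ) * c) := by simp only [map_sub, map_one]; ring
  rw [add_assoc, ← add_smul, add_comm ((γ-1)*c), hco, neg_smul, ← sub_eq_add_neg]

lemma UUstar (γ : ℂ) (y : Lp ℂ 2 μ) :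
    clarkOp μ Mxi xibar one γ
        (ContinuousLinearMap.adjoint (clarkOp μ Mxi xibar one γ) y) =
      y - ((1 - γ * conj γ) * (inner ℂ one y : ℂ)) • one := by
  set c : ℂ := inner ℂ one y with hc
  rw [adjoint_clark_apply hμ Mxi hMxi one xibar hone hxibar, clark_apply]
  rw [map_add, ContinuousLinearMap.map_smul, Mxi_xibar hμ Mxi hMxi one xibar hone hxibar]
  have hMM : Mxi (ContinuousLinearMap.adjoint Mxi y) = y := by
    have := congrFun (congrArg DFunLike.coe (Mxi_comp_adjoint hμ Mxi hMxi)) y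
    simpa using this
  rw [hMM]
  have hin : (inner ℂ xibar (ContinuousLinearMap.adjoint Mxi y
      + (conj (γ-1) * c) • xibar) : ℂ) = conj γ * c := by
    rw [inner_add_right, inner_smul_right, inner_xibar_xibar hμ xibar hxibar]
    have h1 : (inner ℂ xibar (ContinuousLinearMap.adjoint Mxi y) : ℂ) = c := by
      rw [ContinuousLinearMap.adjoint_inner_right,
        Mxi_xibar hμ Mxi hMxi one xibar hone hxibar, ← hc]
    rw [h1]
    simp only [map_sub, map_one]
    ring
  rw [hin]
  have hco : (starRingEnd ℂ) (γ - 1) * c + (γ - 1) * ((starRingEnd ℂ) γ * c)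
      = -((1 - γ * conj γ) * c) := by simp only [map_sub, map_one]; ring
  rw [add_assoc, ← add_smul, hco, neg_smul, ← sub_eq_add_neg]
end clark

section norms
variable (hμ : μ (Metric.sphere (0:ℂ) 1)ᶜ = 0)
    (Mxi : Lp ℂ 2 μ →L[ℂ] Lp ℂ 2 μ)
    (hMxi : ∀ f : Lp ℂ 2 μ, ∀ᵐ ξ ∂μ, (Mxi f) ξ = ξ * f ξ)
    (one xibar : Lp ℂ 2 μ)
    (hone : ∀ᵐ ξ ∂μ, one ξ = 1) (hxibar : ∀ᵐ ξ ∂μ, xibar ξ = conj ξ)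

include hμ hMxi hone hxibar

lemma norm_clark_le (γ : ℂ) (hγ : ‖γ‖ ≤ 1) :
    ‖clarkOp μ Mxi xibar one γ‖ ≤ 1 := by
  set U := clarkOp μ Mxi xibar one γ
  refine ContinuousLinearMap.opNorm_le_bound _ zero_le_one fun f => ?_
  rw [one_mul]
  have h2 : (inner ℂ (U f) (U f) : ℂ) =
      inner ℂ f f - ((1 - γ * conj γ) * (inner ℂ xibar f : ℂ)) * conj (inner ℂ xibar f : ℂ) := by
    rw [← ContinuousLinearMap.adjoint_inner_right,
      UstarU hμ Mxi hMxi one xibar hone hxibar γ f, inner_sub_right, inner_smul_right,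
      ← inner_conj_symm f xibar]
  rw [inner_self_eq_norm_sq_to_K, inner_self_eq_norm_sq_to_K,
    Complex.mul_conj, mul_assoc, Complex.mul_conj] at h2
  have h3 : (‖U f‖^2 : ℝ) = ‖f‖^2 - (1 - Complex.normSq γ) * Complex.normSq (inner ℂ xibar f : ℂ) := by
    have h4 := congrArg Complex.re h2
    simpa [← Complex.ofReal_pow, Complex.sub_re, Complex.mul_re] using h4
  have hγ2 : Complex.normSq γ ≤ 1 := by
    rw [← Complex.sq_norm]
    nlinarith [norm_nonneg γ]
  nlinarith [norm_nonneg (U f), norm_nonneg f, Complex.normSq_nonneg (inner ℂ xibar f : ℂ),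
    h3, hγ2]

end norms

lemma sqrt_vec {E : Type*} [NormedAddCommGroup E] [InnerProductSpace ℂ E] [CompleteSpace E]
    (T : E →L[ℂ] E) (hT : T.IsPositive) (e : E) (he : (inner ℂ e e : ℂ) = 1)
    (r : ℝ) (hr : 0 < r)
    (hT2 : ∀ f, T (T f) = ((r : ℂ) * (inner ℂ e f : ℂ)) • e) :
    T e = ((Real.sqrt r : ℝ) : ℂ) • e := by
  set a : ℂ := inner ℂ e (T e) with ha
  have he0 : e ≠ 0 := by
    intro h; rw [h] at he; simp at he
  have hv : T (T e) = (r : ℂ) • e := by rw [hT2 e, he, mul_one]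
  have hvv : T (T (T e)) = ((r : ℂ) * a) • e := hT2 (T e)
  have hvv' : T (T (T e)) = (r : ℂ) • T e := by rw [hv, ContinuousLinearMap.map_smul]
  have hr0 : (r : ℂ) ≠ 0 := by
    simpa using ne_of_gt hr
  have hTe : T e = a • e := by
    exact smul_right_injective E hr0 (hvv'.symm.trans (hvv.trans (mul_smul _ _ _)))
  have ha2 : a * a = (r : ℂ) := by
    have h1 : ((r : ℂ) - a * a) • e = 0 := by
      rw [sub_smul, ← hv, hTe, ContinuousLinearMap.map_smul, hTe, smul_smul, sub_self]
    rcases smul_eq_zero.mp h1 with h | h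
    · exact (sub_eq_zero.mp h).symm
    · exact absurd h he0
  have hsa : ContinuousLinearMap.adjoint T = T := hT.isSelfAdjoint
  have h5 : (inner ℂ (T e) e : ℂ) = inner ℂ e (T e) := by
    conv_lhs => rw [← hsa]
    exact ContinuousLinearMap.adjoint_inner_left T e e
  have haconj : conj a = a := by
    rw [ha, inner_conj_symm]
    exact h5
  have hre : 0 ≤ a.re := by
    have h6 := hT.2 e
    rw [ContinuousLinearMap.reApplyInnerSelf] at h6
    rw [h5, ← ha] at h6
    exact h6
  have him : a.im = 0 := by
    have := congrArg Complex.im haconj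
    simp at this
    linarith
  have hre2 : a.re ^ 2 = r := by
    have := congrArg Complex.re ha2
    simp [Complex.mul_re, him] at this
    nlinarith
  have hfin : a = ((Real.sqrt r : ℝ) : ℂ) := by
    apply Complex.ext
    · simp only [Complex.ofReal_re]
      rw [← hre2, Real.sqrt_sq hre]
    · simp [him]
  rw [hTe, hfin]

section charf
variable (hμ : μ (Metric.sphere (0:ℂ) 1)ᶜ = 0)
    (Mxi : Lp ℂ 2 μ →L[ℂ] Lp ℂ 2 μ)
    (hMxi : ∀ f : Lp ℂ 2 μ, ∀ᵐ ξ ∂μ, (Mxi f) ξ = ξ * f ξ)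
    (one xibar : Lp ℂ 2 μ)
    (hone : ∀ᵐ ξ ∂μ, one ξ = 1) (hxibar : ∀ᵐ ξ ∂μ, xibar ξ = conj ξ)

include hμ hMxi hone hxibar

lemma resolvent_vec (γ : ℂ) (hγ : ‖γ‖ ≤ 1) (z : ℂ) (hz : ‖z‖ < 1)
    (x : Lp ℂ 2 μ) :
    (1 - z • ContinuousLinearMap.adjoint (clarkOp μ Mxi xibar one γ))
      (Ring.inverse (1 - z • ContinuousLinearMap.adjoint (clarkOp μ Mxi xibar one γ)) x)
      = x ∧
    ∀ y : Lp ℂ 2 μ,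
      Ring.inverse (1 - z • ContinuousLinearMap.adjoint (clarkOp μ Mxi xibar one γ))
        ((1 - z • ContinuousLinearMap.adjoint (clarkOp μ Mxi xibar one γ)) y) = y := by
  set A := z • ContinuousLinearMap.adjoint (clarkOp μ Mxi xibar one γ) with hA
  have hn : ‖A‖ < 1 := by
    rw [hA, norm_smul]
    have h1 : ‖ContinuousLinearMap.adjoint (clarkOp μ Mxi xibar one γ)‖ ≤ 1 := by
      rw [LinearIsometryEquiv.norm_map]
      exact norm_clark_le hμ Mxi hMxi one xibar hone hxibar γ hγ
    calc ‖z‖ * ‖ContinuousLinearMap.adjoint (clarkOp μ Mxi xibar one γ)‖ ≤ ‖z‖ * 1 :=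
      mul_le_mul_of_nonneg_left h1 (norm_nonneg z)
    _ = ‖z‖ := by simp
    _ < 1 := hz
  have hu : IsUnit (1 - A) := isUnit_one_sub_of_norm_lt_one hn
  constructor
  · have h := Ring.mul_inverse_cancel _ hu
    calc (1 - A) (Ring.inverse (1 - A) x) = ((1 - A) * Ring.inverse (1 - A)) x := rfl
    _ = x := by rw [h]; rfl
  · intro y
    have h := Ring.inverse_mul_cancel _ hu
    calc Ring.inverse (1 - A) ((1 - A) y) = (Ring.inverse (1 - A) * (1 - A)) y := rfl
    _ = y := by rw [h]; rfl

lemma charF_eq (γ : ℂ) (hγ : ‖γ‖ < 1)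
    (D Ds : Lp ℂ 2 μ →L[ℂ] Lp ℂ 2 μ)
    (hDpos : D.IsPositive)
    (hD : D ∘L D = 1 - ContinuousLinearMap.adjoint (clarkOp μ Mxi xibar one γ) ∘L
      clarkOp μ Mxi xibar one γ)
    (hDspos : Ds.IsPositive)
    (hDs : Ds ∘L Ds = 1 - clarkOp μ Mxi xibar one γ ∘L
      ContinuousLinearMap.adjoint (clarkOp μ Mxi xibar one γ))
    (z : ℂ) (hz : ‖z‖ < 1) :
    charF (clarkOp μ Mxi xibar one γ) D Ds xibar one z =
      -γ + ((1 - Complex.normSq γ : ℝ) : ℂ) * z *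
        (inner ℂ one (Ring.inverse
          (1 - z • ContinuousLinearMap.adjoint (clarkOp μ Mxi xibar one γ)) xibar) : ℂ) := by
  set U := clarkOp μ Mxi xibar one γ with hU
  set R := Ring.inverse (1 - z • ContinuousLinearMap.adjoint U) with hR
  have hs : (0:ℝ) < 1 - Complex.normSq γ := by
    have : Complex.normSq γ < 1 := by
      rw [← Complex.sq_norm]
      nlinarith [norm_nonneg γ]
    linarith
  have hcast : ((1 - Complex.normSq γ : ℝ) : ℂ) = 1 - γ * conj γ := by
    rw [Complex.mul_conj]
    push_cast
    ring
  have hD2 : ∀ f, D (D f) = (((1 - Complex.normSq γ : ℝ) : ℂ) * (inner ℂ xibar f : ℂ)) • xibar := by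
    intro f
    have h1 : (D ∘L D) f = (1 - ContinuousLinearMap.adjoint U ∘L U) f := by rw [hD]
    simp only [ContinuousLinearMap.comp_apply, ContinuousLinearMap.sub_apply,
      ContinuousLinearMap.one_apply] at h1
    rw [h1, UstarU hμ Mxi hMxi one xibar hone hxibar γ f, hcast]
    abel
  have hDs2 : ∀ y, Ds (Ds y) = (((1 - Complex.normSq γ : ℝ) : ℂ) * (inner ℂ one y : ℂ)) • one := by
    intro y
    have h1 : (Ds ∘L Ds) y = (1 - U ∘L ContinuousLinearMap.adjoint U) y := by rw [hDs]
    simp only [ContinuousLinearMap.comp_apply, ContinuousLinearMap.sub_apply,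
      ContinuousLinearMap.one_apply] at h1
    rw [h1, UUstar hμ Mxi hMxi one xibar hone hxibar γ y, hcast]
    abel
  set d : ℝ := Real.sqrt (1 - Complex.normSq γ) with hd
  have hDxb : D xibar = (d : ℂ) • xibar :=
    sqrt_vec D hDpos xibar (inner_xibar_xibar hμ xibar hxibar) _ hs hD2
  have hDsone : Ds one = (d : ℂ) • one :=
    sqrt_vec Ds hDspos one (inner_one_one one hone) _ hs hDs2
  have hsa : ContinuousLinearMap.adjoint Ds = Ds := hDspos.isSelfAdjoint
  have hinnerDs : ∀ x, (inner ℂ one (Ds x) : ℂ) = (d : ℂ) * inner ℂ one x := by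
    intro x
    conv_lhs => rw [← hsa]
    rw [ContinuousLinearMap.adjoint_inner_right, hDsone, inner_smul_left, Complex.conj_ofReal]
  rw [charF]
  simp only [ContinuousLinearMap.add_apply, ContinuousLinearMap.neg_apply,
    ContinuousLinearMap.smul_apply, ContinuousLinearMap.comp_apply]
  rw [inner_add_right, inner_neg_right, inner_smul_right]
  rw [clark_xibar hμ Mxi hMxi one xibar hone hxibar γ, inner_smul_right,
    inner_one_one one hone, mul_one]
  rw [hDxb, ContinuousLinearMap.map_smul, ContinuousLinearMap.map_smul, inner_smul_right,
    hinnerDs]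
  have hdd : (d:ℂ) * ((d:ℂ) * (inner ℂ one (R xibar) : ℂ)) =
      ((1 - Complex.normSq γ : ℝ) : ℂ) * (inner ℂ one (R xibar) : ℂ) := by
    rw [← mul_assoc, ← Complex.ofReal_mul, hd, Real.mul_self_sqrt hs.le]
  rw [hdd]
  ring
end charf

section livsic
variable (hμ : μ (Metric.sphere (0:ℂ) 1)ᶜ = 0)
    (Mxi : Lp ℂ 2 μ →L[ℂ] Lp ℂ 2 μ)
    (hMxi : ∀ f : Lp ℂ 2 μ, ∀ᵐ ξ ∂μ, (Mxi f) ξ = ξ * f ξ)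
    (one xibar : Lp ℂ 2 μ)
    (hone : ∀ᵐ ξ ∂μ, one ξ = 1) (hxibar : ∀ᵐ ξ ∂μ, xibar ξ = conj ξ)

include hμ hMxi hone hxibar

lemma sherman (β : ℂ) (hβ : ‖β‖ < 1) (z : ℂ) (hz : ‖z‖ < 1) :
    (inner ℂ one (Ring.inverse
        (1 - z • ContinuousLinearMap.adjoint (clarkOp μ Mxi xibar one β)) xibar) : ℂ) =
      (1 + z * conj β * (inner ℂ one (Ring.inverse
        (1 - z • ContinuousLinearMap.adjoint (clarkOp μ Mxi xibar one β)) xibar) : ℂ)) *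
      (inner ℂ one (Ring.inverse
        (1 - z • ContinuousLinearMap.adjoint (clarkOp μ Mxi xibar one 0)) xibar) : ℂ) := by
  set U0 := clarkOp μ Mxi xibar one 0 with hU0
  set Uβ := clarkOp μ Mxi xibar one β with hUβ
  set Rβ := Ring.inverse (1 - z • ContinuousLinearMap.adjoint Uβ) with hRβ
  set R0 := Ring.inverse (1 - z • ContinuousLinearMap.adjoint U0) with hR0
  set g := Rβ xibar with hg
  set g0 := R0 xibar with hg0
  set G : ℂ := inner ℂ one g with hG
  have hadj : ContinuousLinearMap.adjoint Uβ = ContinuousLinearMap.adjoint U0 +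
      conj β • ((innerSL ℂ one).smulRight xibar) := by
    rw [hUβ, hU0, adjoint_clark, adjoint_clark]
    rw [add_assoc]
    congr 1
    rw [← add_smul]
    congr 1
    simp only [map_sub, map_one, map_zero]
    ring
  have hres := resolvent_vec hμ Mxi hMxi one xibar hone hxibar β hβ.le z hz xibar
  have hres0 := resolvent_vec hμ Mxi hMxi one xibar hone hxibar 0 (by simp) z hz xibar
  have hKg : ((innerSL ℂ one).smulRight xibar) g = G • xibar := by
    simp only [ContinuousLinearMap.smulRight_apply, innerSL_apply_apply, ← hG]
  have h1 : (1 - z • ContinuousLinearMap.adjoint U0) g = (1 + z * conj β * G) • xibar := by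
    have h2 : (1 - z • ContinuousLinearMap.adjoint Uβ) g = xibar := hres.1
    have h3 : (1 - z • ContinuousLinearMap.adjoint U0) g =
        (1 - z • ContinuousLinearMap.adjoint Uβ) g + (z * conj β * G) • xibar := by
      rw [hadj]
      simp only [ContinuousLinearMap.sub_apply, ContinuousLinearMap.one_apply,
        ContinuousLinearMap.add_apply, ContinuousLinearMap.smul_apply, hKg, smul_add,
        smul_smul]
      module
    rw [h3, h2, add_smul, one_smul]
  have h4 : g = (1 + z * conj β * G) • g0 := by
    have h5 := hres0.2 g
    rw [h1] at h5
    rw [← h5, ContinuousLinearMap.map_smul]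
  nth_rewrite 1 [hG, h4]
  rw [inner_smul_right]
end livsic

lemma mCircle_ae_abs : ∀ᵐ ξ ∂mCircle, ‖ξ‖ = 1 := by
  rw [mCircle]
  apply Measure.ae_smul_measure
  have hms : MeasurableSet {ξ : ℂ | ‖ξ‖ = 1} :=
    continuous_norm.measurable (measurableSet_singleton (1:ℝ))
  rw [ae_map_iff (measurable_circleMap 0 1).aemeasurable hms]
  filter_upwards with θ
  simp [norm_circleMap_zero]

lemma mobius_inner (b : ℂ) (hb : ‖b‖ < 1) (f g : ℂ → ℂ)
    (h : ∀ z : ℂ, ‖z‖ < 1 → f z * (1 - conj b * g z) = g z - b)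
    (hg : IsInnerFun g) : IsInnerFun f := by
  have hnsq : Complex.normSq b < 1 := by
    rw [← Complex.sq_norm]
    nlinarith [norm_nonneg b]
  have hden : ∀ z : ℂ, ‖z‖ < 1 → 1 - conj b * g z ≠ 0 := by
    intro z hz h0
    have h1 := h z hz
    rw [h0, mul_zero] at h1
    have h2 : g z = b := by
      have := h1.symm
      rwa [sub_eq_zero] at this
    rw [h2] at h0
    rw [show conj b * b = (Complex.normSq b : ℂ) by rw [mul_comm, Complex.mul_conj]] at h0
    have h3 : (Complex.normSq b : ℂ) = 1 := by
      rwa [sub_eq_zero, eq_comm] at h0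
    have h4 : Complex.normSq b = 1 := by exact_mod_cast h3
    linarith
  rw [IsInnerFun] at *
  filter_upwards [hg, mCircle_ae_abs] with ξ hLg hξ
  obtain ⟨L, hL, hL1⟩ := hLg
  have hdenL : 1 - conj b * L ≠ 0 := by
    intro h0
    have h1 : (1:ℂ) = conj b * L := by rwa [sub_eq_zero] at h0
    have h2 := congrArg norm h1
    rw [norm_one, norm_mul, Complex.norm_conj, hL1, mul_one] at h2
    linarith
  refine ⟨(L - b) / (1 - conj b * L), ?_, ?_⟩
  · have hq : Tendsto (fun r : ℝ => (g ((r:ℂ) * ξ) - b) / (1 - conj b * g ((r:ℂ) * ξ)))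
        (𝓝[<] (1:ℝ)) (𝓝 ((L - b) / (1 - conj b * L))) :=
      ((hL.sub tendsto_const_nhds).div
        (tendsto_const_nhds.sub (tendsto_const_nhds.mul hL)) hdenL)
    refine hq.congr' ?_
    have hIoo : Set.Ioo (0:ℝ) 1 ∈ 𝓝[<] (1:ℝ) := Ioo_mem_nhdsLT_of_mem (by norm_num)
    filter_upwards [hIoo] with r hr
    have habs : ‖(r:ℂ) * ξ‖ < 1 := by
      rw [norm_mul, hξ, mul_one, Complex.norm_real, Real.norm_eq_abs, abs_of_pos hr.1]
      exact hr.2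
    rw [div_eq_iff (hden _ habs)]
    exact (h _ habs).symm
  · have hLL : L * conj L = 1 := by
      rw [Complex.mul_conj, Complex.normSq_eq_norm_sq, hL1]
      norm_num
    have hkey : L - b = L * conj (1 - conj b * L) := by
      simp only [map_sub, map_mul, map_one, Complex.conj_conj]
      linear_combination b * hLL
    rw [norm_div, hkey, norm_mul, Complex.norm_conj, hL1, one_mul, div_self]
    intro h0
    rw [norm_eq_zero] at h0
    exact hdenL h0

theorem statement4
    (μ : Measure ℂ) [IsProbabilityMeasure μ] (hμ : μ (Metric.sphere (0:ℂ) 1)ᶜ = 0)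
    (Mxi : Lp ℂ 2 μ →L[ℂ] Lp ℂ 2 μ)
    (hMxi : ∀ f : Lp ℂ 2 μ, ∀ᵐ ξ ∂μ, (Mxi f) ξ = ξ * f ξ)
    (one xibar : Lp ℂ 2 μ)
    (hone : ∀ᵐ ξ ∂μ, one ξ = 1) (hxibar : ∀ᵐ ξ ∂μ, xibar ξ = conj ξ)
    (β : ℂ) (hβ : ‖β‖ < 1)
    -- `D0` and `Ds0` are the positive square roots of `I - Û₀* Û₀` and `I - Û₀ Û₀*`
    (D0 Ds0 : Lp ℂ 2 μ →L[ℂ] Lp ℂ 2 μ)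
    (hD0pos : D0.IsPositive)
    (hD0 : D0 ∘L D0 = 1 - ContinuousLinearMap.adjoint (clarkOp μ Mxi xibar one 0) ∘L
      clarkOp μ Mxi xibar one 0)
    (hDs0pos : Ds0.IsPositive)
    (hDs0 : Ds0 ∘L Ds0 = 1 - clarkOp μ Mxi xibar one 0 ∘L
      ContinuousLinearMap.adjoint (clarkOp μ Mxi xibar one 0))
    -- `Dβ` and `Dsβ` are the positive square roots of `I - Û_β* Û_β` and `I - Û_β Û_β*`
    (Dβ Dsβ : Lp ℂ 2 μ →L[ℂ] Lp ℂ 2 μ)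
    (hDβpos : Dβ.IsPositive)
    (hDβ : Dβ ∘L Dβ = 1 - ContinuousLinearMap.adjoint (clarkOp μ Mxi xibar one β) ∘L
      clarkOp μ Mxi xibar one β)
    (hDsβpos : Dsβ.IsPositive)
    (hDsβ : Dsβ ∘L Dsβ = 1 - clarkOp μ Mxi xibar one β ∘L
      ContinuousLinearMap.adjoint (clarkOp μ Mxi xibar one β)) :
    (∀ z : ℂ, ‖z‖ < 1 →
      charF (clarkOp μ Mxi xibar one β) Dβ Dsβ xibar one z *
          (1 - conj β * charF (clarkOp μ Mxi xibar one 0) D0 Ds0 xibar one z) =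
        charF (clarkOp μ Mxi xibar one 0) D0 Ds0 xibar one z - β) ∧
    (IsInnerFun (charF (clarkOp μ Mxi xibar one β) Dβ Dsβ xibar one) ↔
      IsInnerFun (charF (clarkOp μ Mxi xibar one 0) D0 Ds0 xibar one)) := by
  have hid : ∀ z : ℂ, ‖z‖ < 1 →
      charF (clarkOp μ Mxi xibar one β) Dβ Dsβ xibar one z *
          (1 - conj β * charF (clarkOp μ Mxi xibar one 0) D0 Ds0 xibar one z) =
        charF (clarkOp μ Mxi xibar one 0) D0 Ds0 xibar one z - β := by
    intro z hz
    have hθβ := charF_eq hμ Mxi hMxi one xibar hone hxibar β hβ Dβ Dsβ hDβpos hDβ hDsβpos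
      hDsβ z hz
    have hθ0 := charF_eq hμ Mxi hMxi one xibar hone hxibar 0 (by simp) D0 Ds0 hD0pos hD0
      hDs0pos hDs0 z hz
    have hG := sherman hμ Mxi hMxi one xibar hone hxibar β hβ z hz
    set G : ℂ := inner ℂ one (Ring.inverse
      (1 - z • ContinuousLinearMap.adjoint (clarkOp μ Mxi xibar one β)) xibar) with hGdef
    set w : ℂ := inner ℂ one (Ring.inverse
      (1 - z • ContinuousLinearMap.adjoint (clarkOp μ Mxi xibar one 0)) xibar) with hwdef
    have hS : ((1 - Complex.normSq β : ℝ) : ℂ) = 1 - β * conj β := by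
      rw [Complex.mul_conj]
      push_cast
      ring
    have h0 : ((1 - Complex.normSq (0:ℂ) : ℝ) : ℂ) = 1 := by simp
    rw [hθβ, hθ0, h0]
    linear_combination (((1 - Complex.normSq β : ℝ) : ℂ) * z) * hG + (z * w) * hS
  refine ⟨hid, ?_, ?_⟩
  · intro hβin
    apply mobius_inner (-β) (by simpa using hβ)
      (charF (clarkOp μ Mxi xibar one 0) D0 Ds0 xibar one)
      (charF (clarkOp μ Mxi xibar one β) Dβ Dsβ xibar one) ?_ hβin
    intro z hz
    simp only [map_neg]
    linear_combination (-1 : ℂ) * hid z hz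
  · intro hθin
    exact mobius_inner β hβ _ _ hid hθin

end
end

section
/- For every z in the open unit disc 𝔻 one has Kμ(z) ≠ 0 and the characteristic function θ of the completely non-unitary contraction Û₀ satisfies θ(z)·Kμ(z) = z·K(ξ̄μ)(z); equivalently, θ(z) equals z times the normalized Cauchy transform K(ξ̄μ)(z)/Kμ(z). -/
open MeasureTheory Filter ContinuousLinearMap
open scoped ENNReal Topology ComplexConjugate

noncomputable section

set_option maxHeartbeats 1000000 in
theorem statement5
    (μ : Measure ℂ) [IsProbabilityMeasure μ] (hμ : μ (Metric.sphere (0:ℂ) 1)ᶜ = 0)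
    (Mxi : Lp ℂ 2 μ →L[ℂ] Lp ℂ 2 μ)
    (hMxi : ∀ f : Lp ℂ 2 μ, ∀ᵐ ξ ∂μ, (Mxi f) ξ = ξ * f ξ)
    (one xibar : Lp ℂ 2 μ)
    (hone : ∀ᵐ ξ ∂μ, one ξ = 1) (hxibar : ∀ᵐ ξ ∂μ, xibar ξ = conj ξ)
    -- `D0` and `Ds0` are the positive square roots of `I - Û₀* Û₀` and `I - Û₀ Û₀*`
    (D0 Ds0 : Lp ℂ 2 μ →L[ℂ] Lp ℂ 2 μ)
    (hD0pos : D0.IsPositive)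
    (hD0 : D0 ∘L D0 = 1 - ContinuousLinearMap.adjoint (clarkOp μ Mxi xibar one 0) ∘L
      clarkOp μ Mxi xibar one 0)
    (hDs0pos : Ds0.IsPositive)
    (hDs0 : Ds0 ∘L Ds0 = 1 - clarkOp μ Mxi xibar one 0 ∘L
      ContinuousLinearMap.adjoint (clarkOp μ Mxi xibar one 0))
    (z : ℂ) (hz : ‖z‖ < 1) :
    cauchyT μ oneFun z ≠ 0 ∧
    charF (clarkOp μ Mxi xibar one 0) D0 Ds0 xibar one z * cauchyT μ oneFun z =
      z * cauchyT μ xibarFun z := by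
  set T := clarkOp μ Mxi xibar one 0 with hTdef
  have hz' : ‖z‖ < 1 := hz
  have hz1 : (0:ℝ) < 1 - ‖z‖ := by linarith
  -- a.e. every point is on the unit circle
  have hae : ∀ᵐ ξ ∂μ, ‖ξ‖ = 1 := by
    have h : ∀ᵐ ξ ∂μ, ξ ∈ Metric.sphere (0:ℂ) 1 := by
      rw [ae_iff]
      exact hμ
    filter_upwards [h] with ξ hξ
    simpa using mem_sphere_zero_iff_norm.mp hξ
  -- lower bound for the denominator
  have hdlb : ∀ ξ : ℂ, ‖ξ‖ = 1 → 1 - ‖z‖ ≤ ‖1 - conj ξ * z‖ := by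
    intro ξ h1
    have hcz : ‖conj ξ * z‖ = ‖z‖ := by
      rw [norm_mul, RCLike.norm_conj, h1, one_mul]
    calc 1 - ‖z‖ = ‖(1:ℂ)‖ - ‖conj ξ * z‖ := by rw [hcz, norm_one]
    _ ≤ ‖1 - conj ξ * z‖ := norm_sub_norm_le _ _
  have hdne : ∀ ξ : ℂ, ‖ξ‖ = 1 → (1 - conj ξ * z) ≠ 0 := by
    intro ξ h1 h0
    have h2 := hdlb ξ h1
    rw [h0, norm_zero] at h2
    linarith
  have hquot : ∀ (w ξ : ℂ), ‖ξ‖ = 1 → ‖w / (1 - conj ξ * z)‖ ≤ ‖w‖ * (1 - ‖z‖)⁻¹ := by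
    intro w ξ h1
    rw [norm_div, div_eq_mul_inv]
    have h2 : ‖(1 - conj ξ * z)‖⁻¹ ≤ (1 - ‖z‖)⁻¹ :=
      inv_anti₀ hz1 (hdlb ξ h1)
    exact mul_le_mul_of_nonneg_left h2 (norm_nonneg w)
  -- integrability of the Cauchy integrands
  have hint : ∀ (f : ℂ → ℂ), Measurable f → (∀ ξ, ‖ξ‖ = 1 → ‖f ξ‖ ≤ 1) →
      Integrable (fun ξ => f ξ / (1 - conj ξ * z)) μ := by
    intro f hm hb
    have hmeas : AEStronglyMeasurable (fun ξ => f ξ / (1 - conj ξ * z)) μ :=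
      (hm.div (measurable_const.sub
        (Complex.continuous_conj.measurable.mul_const z))).aestronglyMeasurable
    refine (MemLp.of_bound (p := 1) hmeas ((1 - ‖z‖)⁻¹) ?_).integrable le_rfl
    filter_upwards [hae] with ξ h1
    calc ‖f ξ / (1 - conj ξ * z)‖ ≤ ‖f ξ‖ * (1 - ‖z‖)⁻¹ := hquot _ _ h1
    _ ≤ 1 * (1 - ‖z‖)⁻¹ := by
        have := hb ξ h1
        gcongr
    _ = (1 - ‖z‖)⁻¹ := one_mul _
  have intOne : Integrable (fun ξ => oneFun ξ / (1 - conj ξ * z)) μ :=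
    hint oneFun measurable_const (by intro ξ _; simp [oneFun])
  have intXibar : Integrable (fun ξ => xibarFun ξ / (1 - conj ξ * z)) μ :=
    hint xibarFun Complex.continuous_conj.measurable
      (by intro ξ h1; simp [xibarFun, RCLike.norm_conj, h1])
  set K := cauchyT μ oneFun z with hKdef
  set A := cauchyT μ xibarFun z with hAdef
  -- the relation K = 1 + z A
  have hKA : K - z * A = 1 := by
    rw [hKdef, hAdef, cauchyT, cauchyT, ← integral_const_mul z,
      ← integral_sub intOne (intXibar.const_mul z)]
    have hpt : ∀ᵐ ξ ∂μ, oneFun ξ / (1 - conj ξ * z) -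
        z * (xibarFun ξ / (1 - conj ξ * z)) = 1 := by
      filter_upwards [hae] with ξ h1
      have hd := hdne ξ h1
      field_simp [oneFun, xibarFun]
      simp only [oneFun, xibarFun]
      ring
    rw [integral_congr_ae hpt]
    simp
  -- K ≠ 0 since its real part is positive
  have hKre : (1 - ‖z‖) / 4 ≤ K.re := by
    have hre : ∀ᵐ ξ ∂μ, (1 - ‖z‖) / 4 ≤ (oneFun ξ / (1 - conj ξ * z)).re := by
      filter_upwards [hae] with ξ h1
      have hd := hdne ξ h1
      have hcz : ‖conj ξ * z‖ = ‖z‖ := by rw [norm_mul, RCLike.norm_conj, h1, one_mul]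
      have heq : oneFun ξ / (1 - conj ξ * z) = (1 - conj ξ * z)⁻¹ := by
        simp [oneFun, one_div]
      rw [heq, Complex.inv_re]
      have hreD : 1 - ‖z‖ ≤ (1 - conj ξ * z).re := by
        have h3 : (conj ξ * z).re ≤ ‖z‖ := by
          calc (conj ξ * z).re ≤ |(conj ξ * z).re| := le_abs_self _
          _ ≤ ‖conj ξ * z‖ := by
              exact Complex.abs_re_le_norm _
          _ = ‖z‖ := hcz
        simp only [Complex.sub_re, Complex.one_re]
        linarith
      have hnsq : Complex.normSq (1 - conj ξ * z) ≤ 4 := by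
        have h4 : ‖1 - conj ξ * z‖ ≤ 2 := by
          calc ‖1 - conj ξ * z‖ ≤ ‖(1:ℂ)‖ + ‖conj ξ * z‖ := norm_sub_le _ _
          _ = 1 + ‖z‖ := by rw [norm_one, hcz]
          _ ≤ 2 := by linarith [norm_nonneg z]
        have h5 : Complex.normSq (1 - conj ξ * z) = ‖1 - conj ξ * z‖ ^ 2 := by
          rw [← Complex.sq_norm]
        rw [h5]
        nlinarith [norm_nonneg (1 - conj ξ * z)]
      have hnsqpos : 0 < Complex.normSq (1 - conj ξ * z) := by
        rwa [Complex.normSq_pos]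
      calc (1 - ‖z‖) / 4 ≤ (1 - conj ξ * z).re / 4 := by gcongr
      _ ≤ (1 - conj ξ * z).re / Complex.normSq (1 - conj ξ * z) := by
          gcongr
          linarith
    have h6 : K.re = ∫ ξ, (oneFun ξ / (1 - conj ξ * z)).re ∂μ := by
      rw [hKdef, cauchyT]
      exact (integral_re intOne).symm
    rw [h6]
    calc (1 - ‖z‖) / 4 = ∫ _ , (1 - ‖z‖) / 4 ∂μ := by simp
    _ ≤ ∫ ξ, (oneFun ξ / (1 - conj ξ * z)).re ∂μ :=
        integral_mono_ae (integrable_const _) intOne.re hre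
  have hKne : K ≠ 0 := by
    intro h
    rw [h, Complex.zero_re] at hKre
    linarith
  -- the candidate for the resolvent vector
  set c := A / K with hcdef
  have hcK : c * K = A := div_mul_cancel₀ A hKne
  set G : ℂ → ℂ := fun ξ => conj ξ * (1 - z * c) / (1 - conj ξ * z) with hGdef
  have hGmeas : AEStronglyMeasurable G μ := by
    rw [hGdef]
    exact ((Complex.continuous_conj.measurable.mul_const _).div
      (measurable_const.sub (Complex.continuous_conj.measurable.mul_const z))).aestronglyMeasurable
  have hGmem : MemLp G 2 μ := by
    refine MemLp.of_bound hGmeas (‖1 - z * c‖ * (1 - ‖z‖)⁻¹) ?_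
    filter_upwards [hae] with ξ h1
    rw [hGdef]
    calc ‖conj ξ * (1 - z * c) / (1 - conj ξ * z)‖
        ≤ ‖conj ξ * (1 - z * c)‖ * (1 - ‖z‖)⁻¹ := hquot _ _ h1
    _ = ‖1 - z * c‖ * (1 - ‖z‖)⁻¹ := by
        rw [norm_mul, RCLike.norm_conj, h1, one_mul]
  set gL : Lp ℂ 2 μ := hGmem.toLp G with hgLdef
  have hgL : (gL : ℂ → ℂ) =ᵐ[μ] G := MemLp.coeFn_toLp hGmem
  have hGint : Integrable G μ := hGmem.integrable one_le_two
  have hintG_eq : ∫ ξ, G ξ ∂μ = c := by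
    have h1 : ∀ ξ : ℂ, G ξ = (1 - z * c) * (xibarFun ξ / (1 - conj ξ * z)) := by
      intro ξ
      rw [hGdef, xibarFun]
      ring
    rw [integral_congr_ae (ae_of_all _ h1), integral_const_mul]
    have h2 : ∫ ξ, xibarFun ξ / (1 - conj ξ * z) ∂μ = A := rfl
    rw [h2]
    have h3 : (1 - z * c) * K = 1 := by
      rw [hcdef]
      field_simp
      linear_combination hKA
    rw [← hcK]
    linear_combination c * h3
  -- inner products as integrals
  have hip : ∀ f g : Lp ℂ 2 μ, (inner ℂ f g : ℂ) = ∫ ξ, conj (f ξ) * g ξ ∂μ := by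
    intro f g
    rw [L2.inner_def]
    simp only [RCLike.inner_apply]
    exact integral_congr_ae (ae_of_all _ fun a => mul_comm _ _)
  have hlam : ∀ f : Lp ℂ 2 μ, (inner ℂ xibar f : ℂ) = ∫ ξ, ξ * f ξ ∂μ := by
    intro f
    rw [hip]
    apply integral_congr_ae
    filter_upwards [hxibar] with ξ h
    simp [h]
  have hMxi_one : ∀ f : Lp ℂ 2 μ, (inner ℂ (Mxi f) one : ℂ) = conj (inner ℂ xibar f : ℂ) := by
    intro f
    rw [hip, hlam, ← integral_conj]
    apply integral_congr_ae
    filter_upwards [hMxi f, hone] with ξ h1 h2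
    rw [h1, h2, mul_one]
  have hone_one : (inner ℂ one one : ℂ) = 1 := by
    rw [hip]
    have h : ∀ᵐ ξ ∂μ, conj (one ξ) * one ξ = (1:ℂ) := by
      filter_upwards [hone] with ξ h; simp [h]
    rw [integral_congr_ae h]
    simp
  have hxx : (inner ℂ xibar xibar : ℂ) = 1 := by
    rw [hip]
    have h : ∀ᵐ ξ ∂μ, conj (xibar ξ) * xibar ξ = (1:ℂ) := by
      filter_upwards [hxibar, hae] with ξ h h1
      rw [h, Complex.conj_conj, Complex.mul_conj]
      norm_cast
      rw [Complex.normSq_eq_norm_sq, h1, one_pow]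
    rw [integral_congr_ae h]
    simp
  have hT_apply : ∀ f : Lp ℂ 2 μ, T f = Mxi f - (inner ℂ xibar f : ℂ) • one := by
    intro f
    rw [hTdef, clarkOp, ContinuousLinearMap.add_apply, ContinuousLinearMap.smul_apply,
      ContinuousLinearMap.smulRight_apply, innerSL_apply_apply]
    rw [show ((0:ℂ) - 1) = -1 by ring, neg_one_smul, ← sub_eq_add_neg]
  have hMxibar : Mxi xibar = one := by
    apply Lp.ext
    filter_upwards [hMxi xibar, hxibar, hone, hae] with ξ h1 h2 h3 h4
    rw [h1, h2, h3, Complex.mul_conj]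
    norm_cast
    rw [Complex.normSq_eq_norm_sq, h4, one_pow]
  have hTxibar : T xibar = 0 := by
    rw [hT_apply, hxx, one_smul, hMxibar, sub_self]
  have hTadj_one : ContinuousLinearMap.adjoint T one = 0 := by
    apply ext_inner_left ℂ
    intro v
    rw [inner_zero_right, adjoint_inner_right, hT_apply, inner_sub_left, inner_smul_left,
      hMxi_one, hone_one, mul_one, sub_self]
  -- fixed vectors of the defect operators
  have hsqrt_fix : ∀ (D : Lp ℂ 2 μ →L[ℂ] Lp ℂ 2 μ), D.IsPositive →
      ∀ x : Lp ℂ 2 μ, D (D x) = x → D x = x := by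
    intro D hpos x hx
    have hy : D (D x - x) = -(D x - x) := by
      rw [map_sub, hx, ← neg_sub]
    have h0 := hpos.re_inner_nonneg_left (D x - x)
    rw [hy, inner_neg_left, map_neg] at h0
    have h1 : RCLike.re (inner (𝕜 := ℂ) (D x - x) (D x - x)) ≤ 0 := by linarith
    rw [inner_self_eq_norm_sq (𝕜 := ℂ)] at h1
    have h2 : ‖D x - x‖ = 0 := by nlinarith [norm_nonneg (D x - x)]
    have h3 : D x - x = 0 := norm_eq_zero.mp h2
    rw [sub_eq_zero] at h3
    exact h3
  have hD0x : D0 xibar = xibar := by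
    apply hsqrt_fix D0 hD0pos
    have h := congrArg (fun S : Lp ℂ 2 μ →L[ℂ] Lp ℂ 2 μ => S xibar) hD0
    simpa [ContinuousLinearMap.comp_apply, ContinuousLinearMap.sub_apply,
      ContinuousLinearMap.one_apply, hTxibar] using h
  have hDs0x : Ds0 one = one := by
    apply hsqrt_fix Ds0 hDs0pos
    have h := congrArg (fun S : Lp ℂ 2 μ →L[ℂ] Lp ℂ 2 μ => S one) hDs0
    simpa [ContinuousLinearMap.comp_apply, ContinuousLinearMap.sub_apply,
      ContinuousLinearMap.one_apply, hTadj_one] using h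
  -- T is a contraction
  have hTnorm : ‖T‖ ≤ 1 := by
    refine ContinuousLinearMap.opNorm_le_bound _ zero_le_one fun f => ?_
    rw [one_mul]
    set lam : ℂ := inner ℂ xibar f with hlamdef
    have e1 : (inner ℂ (Mxi f) (Mxi f) : ℂ) = inner ℂ f f := by
      rw [hip, hip]
      apply integral_congr_ae
      filter_upwards [hMxi f, hae] with ξ h1 h2
      rw [h1]
      have h3 : conj (ξ * f ξ) * (ξ * f ξ) = (conj ξ * ξ) * (conj (f ξ) * f ξ) := by
        rw [map_mul]; ring
      rw [h3]
      have h4 : conj ξ * ξ = 1 := by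
        rw [Complex.conj_mul']
        norm_cast
        rw [h2, one_pow]
      rw [h4, one_mul]
    have e2 : (inner ℂ (Mxi f) (lam • one) : ℂ) = lam * conj lam := by
      rw [inner_smul_right, hMxi_one, hlamdef]
    have e3 : (inner ℂ (lam • one) (Mxi f) : ℂ) = conj lam * lam := by
      rw [inner_smul_left]
      have h5 : (inner ℂ one (Mxi f) : ℂ) = lam := by
        rw [← inner_conj_symm, hMxi_one, Complex.conj_conj, hlamdef]
      rw [h5]
    have e4 : (inner ℂ (lam • one) (lam • one) : ℂ) = conj lam * lam := by
      rw [inner_smul_left, inner_smul_right, hone_one, mul_one]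
    have hinner : (inner ℂ (T f) (T f) : ℂ) = inner ℂ f f - lam * conj lam := by
      rw [hT_apply, inner_sub_sub_self, ← hlamdef, e1, e2, e3, e4]
      ring
    have h2 : ‖T f‖ ^ 2 ≤ ‖f‖ ^ 2 := by
      rw [← inner_self_eq_norm_sq (𝕜 := ℂ), ← inner_self_eq_norm_sq (𝕜 := ℂ), hinner, map_sub]
      have h7 : 0 ≤ RCLike.re (lam * conj lam) := by
        rw [Complex.mul_conj]
        simp [Complex.normSq_nonneg]
      linarith
    nlinarith [norm_nonneg (T f), norm_nonneg f]
  -- 1 - z T* is invertible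
  have hadjnorm : ‖ContinuousLinearMap.adjoint T‖ ≤ 1 := by
    rw [LinearIsometryEquiv.norm_map]
    exact hTnorm
  have hsmallnorm : ‖z • ContinuousLinearMap.adjoint T‖ < 1 := by
    rw [norm_smul]
    calc ‖z‖ * ‖ContinuousLinearMap.adjoint T‖ ≤ ‖z‖ * 1 :=
      mul_le_mul_of_nonneg_left hadjnorm (norm_nonneg z)
    _ < 1 := by rw [mul_one]; exact hz'
  have hUnit : IsUnit ((1 : Lp ℂ 2 μ →L[ℂ] Lp ℂ 2 μ) - z • ContinuousLinearMap.adjoint T) := by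
    have h := (Units.oneSub _ hsmallnorm).isUnit
    rwa [Units.val_oneSub] at h
  have hone_g : (inner ℂ one gL : ℂ) = c := by
    rw [hip]
    have h : ∀ᵐ ξ ∂μ, conj (one ξ) * gL ξ = G ξ := by
      filter_upwards [hone, hgL] with ξ h1 h2
      rw [h1, h2, map_one, one_mul]
    rw [integral_congr_ae h]
    exact hintG_eq
  -- the resolvent equation
  have hEq : ((1 : Lp ℂ 2 μ →L[ℂ] Lp ℂ 2 μ) - z • ContinuousLinearMap.adjoint T) gL = xibar := by
    apply ext_inner_left ℂ
    intro f
    rw [ContinuousLinearMap.sub_apply, ContinuousLinearMap.one_apply,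
      ContinuousLinearMap.smul_apply, inner_sub_right, inner_smul_right, adjoint_inner_right,
      hT_apply f, inner_sub_left, inner_smul_left, hone_g]
    have Ef : (inner ℂ f gL : ℂ) = ∫ ξ, conj (f ξ) * G ξ ∂μ := by
      rw [hip]
      exact integral_congr_ae (by filter_upwards [hgL] with ξ h; rw [h])
    have EM : (inner ℂ (Mxi f) gL : ℂ) = ∫ ξ, conj ξ * (conj (f ξ) * G ξ) ∂μ := by
      rw [hip]
      apply integral_congr_ae
      filter_upwards [hMxi f, hgL] with ξ h1 h2
      rw [h1, h2, map_mul]; ring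
    have Ex : (inner ℂ f xibar : ℂ) = ∫ ξ, conj (f ξ) * conj ξ ∂μ := by
      rw [hip]
      exact integral_congr_ae (by filter_upwards [hxibar] with ξ h; rw [h])
    have Econj : conj (inner ℂ xibar f : ℂ) = ∫ ξ, conj ξ * conj (f ξ) ∂μ := by
      rw [hlam, ← integral_conj]
      exact integral_congr_ae (ae_of_all _ fun ξ => by simp)
    have I1 : Integrable (fun ξ => conj (f ξ) * G ξ) μ := by
      have h := L2.integrable_inner (𝕜 := ℂ) f gL
      simp only [RCLike.inner_apply] at h
      exact h.congr (by filter_upwards [hgL] with ξ hh; rw [hh, mul_comm])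
    have I2 : Integrable (fun ξ => conj ξ * (conj (f ξ) * G ξ)) μ := by
      have h := L2.integrable_inner (𝕜 := ℂ) (Mxi f) gL
      simp only [RCLike.inner_apply] at h
      exact h.congr (by filter_upwards [hMxi f, hgL] with ξ h1 h2; rw [h1, h2, map_mul]; ring)
    have I3 : Integrable (fun ξ => conj ξ * conj (f ξ)) μ := by
      have h := L2.integrable_inner (𝕜 := ℂ) (Mxi f) one
      simp only [RCLike.inner_apply] at h
      exact h.congr (by filter_upwards [hMxi f, hone] with ξ h1 h2; rw [h1, h2, map_mul, one_mul])
    have I5 : Integrable (fun ξ : ℂ => z * (conj ξ * (conj (f ξ) * G ξ) -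
        c * (conj ξ * conj (f ξ)))) μ := (I2.sub (I3.const_mul c)).const_mul z
    rw [Ef, EM, Ex, Econj]
    rw [mul_comm (∫ ξ, conj ξ * conj (f ξ) ∂μ) c, ← integral_const_mul c,
      ← integral_sub I2 (I3.const_mul c), ← integral_const_mul z,
      ← integral_sub I1 I5]
    apply integral_congr_ae
    filter_upwards [hae] with ξ h1
    have hd := hdne ξ h1
    rw [hGdef]
    field_simp
    ring
  have hRinv : Ring.inverse ((1 : Lp ℂ 2 μ →L[ℂ] Lp ℂ 2 μ) -
      z • ContinuousLinearMap.adjoint T) xibar = gL := by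
    have h := Ring.inverse_mul_cancel _ hUnit
    have h2 := congrArg (fun S : Lp ℂ 2 μ →L[ℂ] Lp ℂ 2 μ => S gL) h
    simp only [ContinuousLinearMap.mul_apply, ContinuousLinearMap.one_apply] at h2
    rwa [hEq] at h2
  -- the value of the characteristic function
  have hsa : ContinuousLinearMap.adjoint Ds0 = Ds0 :=
    ContinuousLinearMap.isSelfAdjoint_iff'.mp hDs0pos.isSelfAdjoint
  have hchar : charF T D0 Ds0 xibar one z = z * c := by
    rw [charF, ContinuousLinearMap.add_apply, ContinuousLinearMap.neg_apply,
      ContinuousLinearMap.smul_apply, ContinuousLinearMap.comp_apply,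
      ContinuousLinearMap.comp_apply, hD0x, hRinv, hTxibar, neg_zero, inner_add_right,
      inner_zero_right, inner_smul_right, zero_add]
    have h : (inner ℂ one (Ds0 gL) : ℂ) = c := by
      rw [← hsa, adjoint_inner_right, hDs0x, hone_g]
    rw [h]
  refine ⟨hKne, ?_⟩
  rw [hchar, mul_assoc, hcK]
end
end

section
/- For every γ ∈ 𝕋 and every z ∈ ℂ∖𝕋, the normalized Cauchy transforms of ξ̄μ and ξ̄μ_γ satisfy K(ξ̄μ)(z)·Kμ_γ(z) = γ·K(ξ̄μ_γ)(z)·Kμ(z); that is, K(ξ̄μ)/Kμ = γ·K(ξ̄μ_γ)/Kμ_γ wherever the denominators are nonzero. -/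
open MeasureTheory Filter ContinuousLinearMap
open scoped ENNReal Topology ComplexConjugate

noncomputable section

noncomputable def Complex.abs : AbsoluteValue ℂ ℝ := NormedField.toAbsoluteValue ℂ

theorem Complex.norm_eq_abs (z : ℂ) : ‖z‖ = Complex.abs z := rfl

theorem Complex.abs_conj (z : ℂ) : Complex.abs (conj z) = Complex.abs z := Complex.norm_conj z

theorem Complex.normSq_eq_abs (z : ℂ) : Complex.normSq z = Complex.abs z ^ 2 :=
  Complex.normSq_eq_norm_sq z

namespace S6Aux

/-! ### Pointwise facts on the unit circle -/

lemma conj_mul_self {ξ : ℂ} (hξ : Complex.abs ξ = 1) : conj ξ * ξ = 1 := by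
  rw [mul_comm, Complex.mul_conj]
  norm_cast
  rw [Complex.normSq_eq_abs, hξ]; norm_num

lemma denom_ne {z ξ : ℂ} (hz : Complex.abs z ≠ 1) (hξ : Complex.abs ξ = 1) :
    1 - conj ξ * z ≠ 0 := by
  intro h
  have h1 : conj ξ * z = 1 := by linear_combination -h
  have := congrArg Complex.abs h1
  rw [map_mul, Complex.abs_conj, hξ, one_mul, map_one] at this
  exact hz this

lemma gid1 {z ξ : ℂ} (hz : Complex.abs z ≠ 1) (hξ : Complex.abs ξ = 1) :
    z * (conj ξ * (1 - conj ξ * z)⁻¹) = (1 - conj ξ * z)⁻¹ - 1 := by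
  have hd := denom_ne hz hξ
  have e : z * (conj ξ * (1 - conj ξ * z)⁻¹) = (1 - (1 - conj ξ * z)) * (1 - conj ξ * z)⁻¹ := by
    ring
  rw [e, sub_mul, mul_inv_cancel₀ hd, one_mul]

lemma gid2 {z ξ : ℂ} (hz : Complex.abs z ≠ 1) (hξ : Complex.abs ξ = 1) :
    ξ * (1 - conj ξ * z)⁻¹ = ξ + z * (1 - conj ξ * z)⁻¹ := by
  have hd := denom_ne hz hξ
  have hc := conj_mul_self hξ
  field_simp
  linear_combination (z : ℂ) * hc

lemma gid3 {z ξ : ℂ} (hz : Complex.abs z ≠ 1) (hξ : Complex.abs ξ = 1) :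
    (1 - (1 - conj ξ * z)⁻¹) * (z - ξ) = z := by
  have hd := denom_ne hz hξ
  have hc := conj_mul_self hξ
  field_simp
  linear_combination (z : ℂ) * hc

lemma gser_lt {z ξ : ℂ} (hz : Complex.abs z < 1) (hξ : Complex.abs ξ = 1) :
    (1 - conj ξ * z)⁻¹ = ∑' n : ℕ, (conj ξ * z) ^ n := by
  refine (tsum_geometric_of_norm_lt_one ?_).symm
  rw [Complex.norm_eq_abs, map_mul, Complex.abs_conj, hξ, one_mul]
  exact hz

lemma gser_gt {z ξ : ℂ} (hz : 1 < Complex.abs z) (hξ : Complex.abs ξ = 1) :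
    (1 - conj ξ * z)⁻¹ = 1 - ∑' n : ℕ, (ξ * z⁻¹) ^ n := by
  have hz0 : z ≠ 0 := by
    intro h; rw [h, map_zero] at hz; linarith
  have hnorm : ‖ξ * z⁻¹‖ < 1 := by
    rw [Complex.norm_eq_abs, map_mul, hξ, one_mul, map_inv₀]
    rw [inv_lt_one_iff₀]
    right; exact hz
  rw [tsum_geometric_of_norm_lt_one hnorm]
  have he : (1 : ℂ) - ξ * z⁻¹ ≠ 0 := by
    intro h
    have h1 : ξ * z⁻¹ = 1 := by linear_combination -h
    have := congrArg Complex.abs h1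
    rw [map_mul, hξ, one_mul, map_inv₀, map_one] at this
    rw [inv_eq_one] at this
    exact (by linarith : Complex.abs z ≠ 1) this
  have hd := denom_ne (by linarith : Complex.abs z ≠ 1) hξ
  have hc := conj_mul_self hξ
  have hzξ : z - ξ ≠ 0 := sub_ne_zero.mpr (by intro h; rw [← h] at hξ; linarith)
  field_simp
  linear_combination (-z : ℂ) * hc

/-! ### Measurability and integrability -/

lemma circle_ae (τ : Measure ℂ) (hτ : τ (Metric.sphere (0:ℂ) 1)ᶜ = 0) :
    ∀ᵐ ξ ∂τ, Complex.abs ξ = 1 := by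
  have h : ∀ᵐ ξ ∂τ, ξ ∈ Metric.sphere (0:ℂ) 1 := by
    rw [MeasureTheory.ae_iff]
    exact hτ
  filter_upwards [h] with ξ hξ
  rw [mem_sphere_zero_iff_norm] at hξ
  rwa [Complex.norm_eq_abs] at hξ

lemma conj_cont : Continuous (fun ξ : ℂ => conj ξ) := Complex.continuous_conj

lemma g_meas (z : ℂ) : Measurable (fun ξ : ℂ => (1 - conj ξ * z)⁻¹) :=
  ((continuous_const.sub (conj_cont.mul continuous_const)).measurable).inv

lemma norm_g_le {z ξ : ℂ} (hz : Complex.abs z ≠ 1) (hξ : Complex.abs ξ = 1) :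
    ‖(1 - conj ξ * z)⁻¹‖ ≤ |1 - Complex.abs z|⁻¹ := by
  rw [Complex.norm_eq_abs, map_inv₀]
  have h1 : |1 - Complex.abs z| ≤ Complex.abs (1 - conj ξ * z) := by
    have := Complex.abs.abs_abv_sub_le_abv_sub 1 (conj ξ * z)
    rwa [map_one, map_mul, Complex.abs_conj, hξ, one_mul] at this
  have h2 : 0 < |1 - Complex.abs z| := by
    rw [abs_pos]; intro h; exact hz (by linarith)
  exact inv_anti₀ h2 h1

lemma int_Pg (τ : Measure ℂ) [IsProbabilityMeasure τ]
    (hτ : ∀ᵐ ξ ∂τ, Complex.abs ξ = 1) {z : ℂ} (hz : Complex.abs z ≠ 1)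
    {P : ℂ → ℂ} (hP : Measurable P) (hPle : ∀ᵐ ξ ∂τ, ‖P ξ‖ ≤ 1) :
    Integrable (fun ξ : ℂ => P ξ * (1 - conj ξ * z)⁻¹) τ := by
  refine Integrable.mono' (integrable_const (|1 - Complex.abs z|⁻¹))
    ((hP.mul (g_meas z)).aestronglyMeasurable) ?_
  filter_upwards [hτ, hPle] with ξ h1 h2
  rw [norm_mul]
  calc ‖P ξ‖ * ‖(1 - conj ξ * z)⁻¹‖ ≤ 1 * |1 - Complex.abs z|⁻¹ := by
        apply mul_le_mul h2 (norm_g_le hz h1) (norm_nonneg _) zero_le_one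
    _ = _ := one_mul _

lemma int_g (τ : Measure ℂ) [IsProbabilityMeasure τ]
    (hτ : ∀ᵐ ξ ∂τ, Complex.abs ξ = 1) {z : ℂ} (hz : Complex.abs z ≠ 1) :
    Integrable (fun ξ : ℂ => (1 - conj ξ * z)⁻¹) τ := by
  have := int_Pg τ hτ hz (P := fun _ => 1) measurable_const
    (Eventually.of_forall (fun ξ => by norm_num))
  simpa using this

lemma int_xbarg (τ : Measure ℂ) [IsProbabilityMeasure τ]
    (hτ : ∀ᵐ ξ ∂τ, Complex.abs ξ = 1) {z : ℂ} (hz : Complex.abs z ≠ 1) :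
    Integrable (fun ξ : ℂ => conj ξ * (1 - conj ξ * z)⁻¹) τ := by
  refine (int_Pg τ hτ hz (P := fun ξ => conj ξ) conj_cont.measurable ?_)
  filter_upwards [hτ] with ξ h1
  rw [Complex.norm_eq_abs, Complex.abs_conj, h1]

lemma tsum_bound (τ : Measure ℂ) [IsProbabilityMeasure τ] {r : ℂ}
    (hr : Complex.abs r < 1) {F : ℕ → ℂ → ℂ}
    (hF : ∀ n, ∀ᵐ ξ ∂τ, ‖F n ξ‖₊ = ‖r‖₊ ^ n) :
    ∑' n : ℕ, ∫⁻ ξ, ‖F n ξ‖₊ ∂τ ≠ ⊤ := by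
  have h1 : ∀ n, ∫⁻ ξ, (‖F n ξ‖₊ : ℝ≥0∞) ∂τ = (‖r‖₊ : ℝ≥0∞) ^ n := by
    intro n
    rw [lintegral_congr_ae (g := fun _ => (‖r‖₊ : ℝ≥0∞) ^ n) ?_, lintegral_const,
      measure_univ, mul_one]
    filter_upwards [hF n] with ξ h
    rw [h]; push_cast; ring
  simp_rw [h1]
  rw [ENNReal.tsum_geometric]
  refine ENNReal.inv_ne_top.mpr ?_
  rw [Ne, tsub_eq_zero_iff_le, not_le]
  rw [ENNReal.coe_lt_one_iff]
  rw [← Complex.norm_eq_abs, ← coe_nnnorm] at hr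
  exact_mod_cast hr

/-! ### Series expansions of Cauchy integrals -/

lemma cauchy_series_lt (τ : Measure ℂ) [IsProbabilityMeasure τ]
    (hτ : ∀ᵐ ξ ∂τ, Complex.abs ξ = 1) {z : ℂ} (hz : Complex.abs z < 1) :
    ∫ ξ, (1 - conj ξ * z)⁻¹ ∂τ = ∑' n : ℕ, ∫ ξ, (conj ξ * z) ^ n ∂τ := by
  rw [← integral_tsum (f := fun n (ξ : ℂ) => (conj ξ * z) ^ n)
    (fun n => ((conj_cont.mul continuous_const).pow n).aestronglyMeasurable) ?_]
  · refine integral_congr_ae ?_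
    filter_upwards [hτ] with ξ hξ
    exact gser_lt hz hξ
  · refine tsum_bound τ hz ?_
    intro n
    filter_upwards [hτ] with ξ hξ
    rw [nnnorm_pow, nnnorm_mul]
    congr 2
    have h2 : (‖conj ξ‖₊ : ℝ) = 1 := by
      rw [coe_nnnorm, Complex.norm_eq_abs, Complex.abs_conj, hξ]
    have h3 : ‖conj ξ‖₊ = 1 := by exact_mod_cast h2
    rw [h3, one_mul]

lemma cauchy_series_gt (τ : Measure ℂ) [IsProbabilityMeasure τ]
    (hτ : ∀ᵐ ξ ∂τ, Complex.abs ξ = 1) {z : ℂ} (hz : 1 < Complex.abs z) :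
    ∫ ξ, (1 - conj ξ * z)⁻¹ ∂τ = 1 - ∑' n : ℕ, ∫ ξ, (ξ * z⁻¹) ^ n ∂τ := by
  have hzi : Complex.abs z⁻¹ < 1 := by
    rw [map_inv₀, inv_lt_one_iff₀]; right; exact hz
  have h1 : ∫ ξ, ∑' n : ℕ, (ξ * z⁻¹) ^ n ∂τ = ∑' n : ℕ, ∫ ξ, (ξ * z⁻¹) ^ n ∂τ := by
    refine integral_tsum (fun n => ((continuous_id.mul continuous_const).pow n).aestronglyMeasurable) ?_
    refine tsum_bound τ hzi ?_
    intro n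
    filter_upwards [hτ] with ξ hξ
    rw [nnnorm_pow, nnnorm_mul]
    congr 2
    have h2 : (‖ξ‖₊ : ℝ) = 1 := by rw [coe_nnnorm, Complex.norm_eq_abs, hξ]
    have h3 : ‖ξ‖₊ = 1 := by exact_mod_cast h2
    rw [h3, one_mul]
  have h2 : ∫ ξ, ∑' n : ℕ, (ξ * z⁻¹) ^ n ∂τ
      = ∫ ξ, (1 - (1 - conj ξ * z)⁻¹) ∂τ := by
    refine integral_congr_ae ?_
    filter_upwards [hτ] with ξ hξ
    have := gser_gt hz hξ
    linear_combination this
  have h3 : ∫ ξ, (1 - (1 - conj ξ * z)⁻¹) ∂τ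
      = 1 - ∫ ξ, (1 - conj ξ * z)⁻¹ ∂τ := by
    rw [integral_sub (integrable_const 1) (int_g τ hτ (by linarith))]
    simp
  rw [h2, h3] at h1
  linear_combination -h1

lemma wrel (τ : Measure ℂ) [IsProbabilityMeasure τ] (hτ : ∀ᵐ ξ ∂τ, Complex.abs ξ = 1)
    {z : ℂ} (hz : Complex.abs z ≠ 1) :
    z * ∫ ξ, conj ξ * (1 - conj ξ * z)⁻¹ ∂τ = (∫ ξ, (1 - conj ξ * z)⁻¹ ∂τ) - 1 := by
  rw [← integral_const_mul]
  have h1 : ∫ ξ, z * (conj ξ * (1 - conj ξ * z)⁻¹) ∂τ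
      = ∫ ξ, ((1 - conj ξ * z)⁻¹ - 1) ∂τ := by
    refine integral_congr_ae ?_
    filter_upwards [hτ] with ξ hξ
    exact gid1 hz hξ
  rw [h1, integral_sub (int_g τ hτ hz) (integrable_const 1), integral_const, probReal_univ]
  simp

/-! ### The Clark operator -/

variable {μ : Measure ℂ} [IsProbabilityMeasure μ]
  (Mxi : Lp ℂ 2 μ →L[ℂ] Lp ℂ 2 μ) (one xibar : Lp ℂ 2 μ) (γ : ℂ)

lemma clark_apply (f : Lp ℂ 2 μ) :
    (clarkOp μ Mxi xibar one γ) f = Mxi f + ((γ - 1) * (inner ℂ xibar f : ℂ)) • one := by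
  simp [clarkOp, ContinuousLinearMap.smul_apply, ContinuousLinearMap.smulRight_apply,
    innerSL_apply_apply, smul_smul]

lemma inner_one_eq (hone : ∀ᵐ ξ ∂μ, one ξ = 1) (x : Lp ℂ 2 μ) :
    (inner ℂ one x : ℂ) = ∫ ξ, x ξ ∂μ := by
  rw [L2.inner_def]
  refine integral_congr_ae ?_
  filter_upwards [hone] with ξ h1
  rw [RCLike.inner_apply', h1, map_one, one_mul]

lemma inner_xibar_eq (hxibar : ∀ᵐ ξ ∂μ, xibar ξ = conj ξ) (x : Lp ℂ 2 μ) :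
    (inner ℂ xibar x : ℂ) = ∫ ξ, ξ * x ξ ∂μ := by
  rw [L2.inner_def]
  refine integral_congr_ae ?_
  filter_upwards [hxibar] with ξ h1
  rw [RCLike.inner_apply', h1, Complex.conj_conj]

lemma inner_one_one (hone : ∀ᵐ ξ ∂μ, one ξ = 1) : (inner ℂ one one : ℂ) = 1 := by
  rw [inner_one_eq one hone one]
  have : ∫ ξ, (one : Lp ℂ 2 μ) ξ ∂μ = ∫ (_ : ℂ), (1:ℂ) ∂μ := integral_congr_ae hone
  rw [this, integral_const, probReal_univ]
  simp

lemma clark_coe (hMxi : ∀ f : Lp ℂ 2 μ, ∀ᵐ ξ ∂μ, (Mxi f) ξ = ξ * f ξ)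
    (hone : ∀ᵐ ξ ∂μ, one ξ = 1) (f : Lp ℂ 2 μ) :
    (⇑((clarkOp μ Mxi xibar one γ) f) : ℂ → ℂ) =ᵐ[μ]
      fun ξ => ξ * f ξ + ((γ - 1) * (inner ℂ xibar f : ℂ)) * 1 := by
  rw [clark_apply]
  filter_upwards [Lp.coeFn_add (Mxi f) (((γ - 1) * (inner ℂ xibar f : ℂ)) • one),
    Lp.coeFn_smul ((γ - 1) * (inner ℂ xibar f : ℂ)) one, hMxi f, hone] with ξ h1 h2 h3 h4
  rw [h1, Pi.add_apply, h3, h2, Pi.smul_apply, smul_eq_mul, h4]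

lemma clark_isometry (hμc : ∀ᵐ ξ ∂μ, Complex.abs ξ = 1)
    (hMxi : ∀ f : Lp ℂ 2 μ, ∀ᵐ ξ ∂μ, (Mxi f) ξ = ξ * f ξ)
    (hone : ∀ᵐ ξ ∂μ, one ξ = 1) (hxibar : ∀ᵐ ξ ∂μ, xibar ξ = conj ξ)
    (hγ : Complex.abs γ = 1) (f : Lp ℂ 2 μ) :
    ‖(clarkOp μ Mxi xibar one γ) f‖ = ‖f‖ := by
  have hγγ : γ * conj γ = 1 := by
    rw [Complex.mul_conj]; norm_cast; rw [Complex.normSq_eq_abs, hγ]; norm_num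
  set p : ℂ := inner ℂ xibar f with hp
  set c : ℂ := (γ - 1) * p with hc
  have h11 : (inner ℂ (Mxi f) (Mxi f) : ℂ) = inner ℂ f f := by
    rw [L2.inner_def, L2.inner_def]
    refine integral_congr_ae ?_
    filter_upwards [hMxi f, hμc] with ξ h1 h2
    rw [RCLike.inner_apply', RCLike.inner_apply', h1, map_mul]
    have h3 := conj_mul_self h2
    linear_combination (conj (f ξ) * f ξ) * h3
  have hM1 : (inner ℂ (Mxi f) one : ℂ) = conj p := by
    rw [L2.inner_def]
    have : ∫ ξ, (inner ℂ ((Mxi f) ξ) (one ξ) : ℂ) ∂μ = ∫ ξ, conj (ξ * f ξ) ∂μ := by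
      refine integral_congr_ae ?_
      filter_upwards [hMxi f, hone] with ξ h1 h2
      rw [RCLike.inner_apply', h1, h2, mul_one]
    rw [this, integral_conj, hp, inner_xibar_eq xibar hxibar]
  have h1M : (inner ℂ one (Mxi f) : ℂ) = p := by
    rw [← inner_conj_symm, hM1, Complex.conj_conj]
  have hinner : (inner ℂ ((clarkOp μ Mxi xibar one γ) f) ((clarkOp μ Mxi xibar one γ) f) : ℂ)
      = inner ℂ f f := by
    rw [clark_apply, inner_add_add_self, h11, inner_smul_right, hM1,
      inner_smul_left, h1M, inner_smul_left, inner_smul_right, inner_one_one one hone]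
    have hcc : (starRingEnd ℂ) c = (conj γ - 1) * conj p := by
      rw [hc, map_mul, map_sub, map_one]
    rw [hcc, ← hp]
    linear_combination (p * conj p) * hγγ
  have h2 := congrArg (fun t : ℂ => RCLike.re t) hinner
  rw [inner_self_eq_norm_sq, inner_self_eq_norm_sq] at h2
  nlinarith [norm_nonneg ((clarkOp μ Mxi xibar one γ) f), norm_nonneg f]

lemma adjoint_clark_ae (hμc : ∀ᵐ ξ ∂μ, Complex.abs ξ = 1)
    (hMxi : ∀ f : Lp ℂ 2 μ, ∀ᵐ ξ ∂μ, (Mxi f) ξ = ξ * f ξ)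
    (hone : ∀ᵐ ξ ∂μ, one ξ = 1) (hxibar : ∀ᵐ ξ ∂μ, xibar ξ = conj ξ)
    (h : Lp ℂ 2 μ) :
    (⇑(ContinuousLinearMap.adjoint (clarkOp μ Mxi xibar one γ) h) : ℂ → ℂ) =ᵐ[μ]
      fun ξ => conj ξ * h ξ + ((conj γ - 1) * (inner ℂ one h : ℂ)) * conj ξ := by
  set K : ℂ := inner ℂ one h with hK
  set Q : ℂ → ℂ := fun ξ => conj ξ * h ξ + ((conj γ - 1) * K) * conj ξ with hQdef
  have hQ1m : AEStronglyMeasurable (fun ξ : ℂ => conj ξ * h ξ) μ :=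
    conj_cont.aestronglyMeasurable.mul (Lp.aestronglyMeasurable h)
  have hQ1 : MemLp (fun ξ : ℂ => conj ξ * h ξ) 2 μ := by
    refine MemLp.of_le (Lp.memLp h) hQ1m ?_
    filter_upwards [hμc] with ξ h1
    rw [norm_mul, Complex.norm_eq_abs (conj ξ), Complex.abs_conj, h1, one_mul]
  have hQ2 : MemLp (fun ξ : ℂ => ((conj γ - 1) * K) * conj ξ) 2 μ := by
    refine MemLp.of_le (memLp_const (μ := μ) (p := 2) ((conj γ - 1) * K))
      (aestronglyMeasurable_const.mul conj_cont.aestronglyMeasurable) ?_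
    filter_upwards [hμc] with ξ h1
    rw [norm_mul, Complex.norm_eq_abs (conj ξ), Complex.abs_conj, h1, mul_one]
  have hQ : MemLp Q 2 μ := hQ1.add hQ2
  have hq : ContinuousLinearMap.adjoint (clarkOp μ Mxi xibar one γ) h = hQ.toLp Q := by
    refine ext_inner_left ℂ (fun f => ?_)
    rw [ContinuousLinearMap.adjoint_inner_right]
    have int1 : Integrable (fun ξ : ℂ => conj (f ξ) * (conj ξ * h ξ)) μ := by
      refine (L2.integrable_inner (𝕜 := ℂ) (Mxi f) h).congr ?_
      filter_upwards [hMxi f] with ξ h1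
      rw [RCLike.inner_apply', h1, map_mul]; ring
    have int2 : Integrable (fun ξ : ℂ => h ξ) μ :=
      MemLp.integrable one_le_two (Lp.memLp h)
    have int3 : Integrable (fun ξ : ℂ => conj (f ξ) * conj ξ) μ := by
      refine (L2.integrable_inner (𝕜 := ℂ) f xibar).congr ?_
      filter_upwards [hxibar] with ξ h1
      rw [RCLike.inner_apply', h1]
    have hpf : (inner ℂ xibar f : ℂ) = ∫ ξ, ξ * f ξ ∂μ := inner_xibar_eq xibar hxibar f
    have hL : (inner ℂ ((clarkOp μ Mxi xibar one γ) f) h : ℂ)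
        = ∫ ξ, (conj (f ξ) * (conj ξ * h ξ)
            + (conj ((γ - 1) * (inner ℂ xibar f : ℂ))) * h ξ) ∂μ := by
      rw [L2.inner_def]
      refine integral_congr_ae ?_
      filter_upwards [clark_coe Mxi one xibar γ hMxi hone f] with ξ h1
      rw [RCLike.inner_apply', h1]
      simp only [map_add, map_mul, map_sub, map_one, mul_one]
      ring
    have hR : (inner ℂ f (hQ.toLp Q) : ℂ)
        = ∫ ξ, (conj (f ξ) * (conj ξ * h ξ)
            + ((conj γ - 1) * K) * (conj (f ξ) * conj ξ)) ∂μ := by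
      rw [L2.inner_def]
      refine integral_congr_ae ?_
      filter_upwards [hQ.coeFn_toLp] with ξ h1
      rw [RCLike.inner_apply', h1, hQdef]
      ring
    rw [hL, hR, integral_add int1 (int2.const_mul _), integral_add int1 (int3.const_mul _)]
    congr 1
    rw [integral_const_mul, integral_const_mul]
    have h5 : ∫ ξ, conj (f ξ) * conj ξ ∂μ = conj (inner ℂ xibar f : ℂ) := by
      rw [hpf, ← integral_conj]
      refine integral_congr_ae (Eventually.of_forall (fun ξ => ?_))
      simp only [map_mul]; ring
    rw [h5]
    have h7 : ∫ ξ, h ξ ∂μ = K := by rw [hK, inner_one_eq one hone h]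
    rw [h7]
    simp only [map_mul, map_sub, map_one]
    ring
  rw [hq]
  filter_upwards [hQ.coeFn_toLp] with ξ h1
  rw [h1]

end S6Aux

set_option linter.unusedSectionVars false in
set_option maxHeartbeats 2000000 in
theorem statement6
    (μ : Measure ℂ) [IsProbabilityMeasure μ] (hμ : μ (Metric.sphere (0:ℂ) 1)ᶜ = 0)
    (Mxi : Lp ℂ 2 μ →L[ℂ] Lp ℂ 2 μ)
    (hMxi : ∀ f : Lp ℂ 2 μ, ∀ᵐ ξ ∂μ, (Mxi f) ξ = ξ * f ξ)
    (one xibar : Lp ℂ 2 μ)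
    (hone : ∀ᵐ ξ ∂μ, one ξ = 1) (hxibar : ∀ᵐ ξ ∂μ, xibar ξ = conj ξ)
    (γ : ℂ) (hγ : ‖γ‖ = 1)
    -- `μγ` is the spectral measure of `Û_γ` with respect to the cyclic vector `1`
    (μγ : Measure ℂ) [IsProbabilityMeasure μγ] (hμγsupp : μγ (Metric.sphere (0:ℂ) 1)ᶜ = 0)
    (hμγmom : ∀ k : ℤ,
      (inner ℂ one (zpowOp (clarkOp μ Mxi xibar one γ) k one) : ℂ) = ∫ ξ, ξ ^ k ∂μγ)
    (z : ℂ) (hz : z ∉ Metric.sphere (0:ℂ) 1) :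
    cauchyT μ xibarFun z * cauchyT μγ oneFun z =
      γ * cauchyT μγ xibarFun z * cauchyT μ oneFun z := by
  have hμc : ∀ᵐ ξ ∂μ, Complex.abs ξ = 1 := S6Aux.circle_ae μ hμ
  have hμγc : ∀ᵐ ξ ∂μγ, Complex.abs ξ = 1 := S6Aux.circle_ae μγ hμγsupp
  have hzabs : Complex.abs z ≠ 1 := by
    intro hh
    exact hz (by rwa [mem_sphere_zero_iff_norm, Complex.norm_eq_abs])
  have hγγ : γ * conj γ = 1 := by
    rw [Complex.mul_conj]; norm_cast; rw [Complex.normSq_eq_norm_sq, hγ]; norm_num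
  set U : Lp ℂ 2 μ →L[ℂ] Lp ℂ 2 μ := clarkOp μ Mxi xibar one γ with hUdef
  have hUnorm : ‖U‖ ≤ 1 := by
    refine ContinuousLinearMap.opNorm_le_bound U zero_le_one (fun f => ?_)
    rw [one_mul, hUdef, S6Aux.clark_isometry Mxi one xibar γ hμc hMxi hone hxibar hγ f]
  have hUadjnorm : ‖ContinuousLinearMap.adjoint U‖ ≤ 1 := by
    rw [LinearIsometryEquiv.norm_map ContinuousLinearMap.adjoint U]
    exact hUnorm
  have hmom_neg : ∀ n : ℕ, (inner ℂ one (((ContinuousLinearMap.adjoint U) ^ n) one) : ℂ)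
      = ∫ ξ, (conj ξ) ^ n ∂μγ := by
    intro n
    have h1 := hμγmom (-(n : ℤ))
    have h2 : zpowOp U (-(n : ℤ)) = (ContinuousLinearMap.adjoint U) ^ n := by
      rcases Nat.eq_zero_or_pos n with hn | hn
      · subst hn; simp [zpowOp]
      · rw [zpowOp, if_neg (by omega), neg_neg, Int.toNat_natCast]
    rw [h2] at h1
    rw [h1]
    refine integral_congr_ae ?_
    filter_upwards [hμγc] with ξ hξ
    have hcc : conj ξ * ξ = 1 := S6Aux.conj_mul_self hξ
    have hcinv : conj ξ = ξ⁻¹ := eq_inv_of_mul_eq_one_left hcc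
    rw [zpow_neg, zpow_natCast, hcinv, inv_pow]
  have hmom_pos : ∀ n : ℕ, (inner ℂ one ((U ^ n) one) : ℂ) = ∫ ξ, ξ ^ n ∂μγ := by
    intro n
    have h1 := hμγmom (n : ℤ)
    have h2 : zpowOp U (n : ℤ) = U ^ n := by
      rw [zpowOp, if_pos (by omega), Int.toNat_natCast]
    rw [h2] at h1
    rw [h1]
    refine integral_congr_ae (Eventually.of_forall (fun ξ => ?_))
    exact zpow_natCast ξ n
  simp only [cauchyT, xibarFun, oneFun, div_eq_mul_inv, one_mul]
  set s : ℂ := ∫ ξ, (1 - conj ξ * z)⁻¹ ∂μ with hs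
  set w : ℂ := ∫ ξ, conj ξ * (1 - conj ξ * z)⁻¹ ∂μ with hw
  set Kγ : ℂ := ∫ ξ, (1 - conj ξ * z)⁻¹ ∂μγ with hKγdef
  set Kξγ : ℂ := ∫ ξ, conj ξ * (1 - conj ξ * z)⁻¹ ∂μγ with hKξγdef
  show w * Kγ = γ * Kξγ * s
  by_cases hz0 : z = 0
  · -- trivial case z = 0
    subst hz0
    have hint1μ : s = 1 := by rw [hs]; simp
    have hint1γ : Kγ = 1 := by rw [hKγdef]; simp
    have hint2μ : w = ∫ ξ, conj ξ ∂μ := by rw [hw]; simp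
    have hint2γ : Kξγ = ∫ ξ, conj ξ ∂μγ := by rw [hKξγdef]; simp
    have hb := hmom_neg 1
    simp only [pow_one] at hb
    have h2 : (inner ℂ one ((ContinuousLinearMap.adjoint U) one) : ℂ)
        = conj ((inner ℂ one (U one) : ℂ)) := by
      rw [ContinuousLinearMap.adjoint_inner_right, ← inner_conj_symm]
    have hxi1 : (inner ℂ xibar one : ℂ) = ∫ ξ, ξ ∂μ := by
      rw [S6Aux.inner_xibar_eq xibar hxibar one]
      refine integral_congr_ae ?_
      filter_upwards [hone] with ξ h1
      rw [h1, mul_one]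
    have h3 : (inner ℂ one (U one) : ℂ) = γ * ∫ ξ, ξ ∂μ := by
      rw [hUdef, S6Aux.clark_apply Mxi one xibar γ one, inner_add_right, inner_smul_right,
        S6Aux.inner_one_one one hone, hxi1]
      have h4 : (inner ℂ one (Mxi one) : ℂ) = ∫ ξ, ξ ∂μ := by
        rw [S6Aux.inner_one_eq one hone]
        refine integral_congr_ae ?_
        filter_upwards [hMxi one, hone] with ξ h1 h5
        rw [h1, h5, mul_one]
      rw [h4]
      ring
    have h5 : ∫ ξ, conj ξ ∂μγ = conj γ * ∫ ξ, conj ξ ∂μ := by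
      rw [← hb, h2, h3, map_mul, ← integral_conj]
    rw [hint1μ, hint1γ, hint2μ, hint2γ, h5]
    linear_combination (-(∫ ξ, conj ξ ∂μ)) * hγγ
  · rcases hzabs.lt_or_gt with hlt | hgt
    · -- |z| < 1, z ≠ 0
      have hT : ‖(z • ContinuousLinearMap.adjoint U : Lp ℂ 2 μ →L[ℂ] Lp ℂ 2 μ)‖ < 1 := by
        rw [norm_smul]
        have h1 : ‖z‖ * ‖ContinuousLinearMap.adjoint U‖ ≤ ‖z‖ * 1 :=
          mul_le_mul_of_nonneg_left hUadjnorm (norm_nonneg z)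
        rw [mul_one] at h1
        refine lt_of_le_of_lt h1 ?_
        rwa [Complex.norm_eq_abs]
      set T : Lp ℂ 2 μ →L[ℂ] Lp ℂ 2 μ := z • ContinuousLinearMap.adjoint U with hTdef
      have hsummable : Summable (fun n : ℕ => T ^ n) := summable_geometric_of_norm_lt_one hT
      set h : Lp ℂ 2 μ := (∑' n : ℕ, T ^ n) one with hhdef
      have hSh : HasSum (fun n : ℕ => (T ^ n) one) h := by
        have h1 := hsummable.hasSum.mapL (ContinuousLinearMap.apply ℂ (Lp ℂ 2 μ) one)
        simpa using h1
      have hKh : HasSum (fun n : ℕ => (inner ℂ one ((T ^ n) one) : ℂ)) (inner ℂ one h : ℂ) := by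
        have h1 := hSh.mapL (innerSL ℂ one)
        simpa using h1
      set K : ℂ := (inner ℂ one h : ℂ) with hKdef
      have hterm : ∀ n : ℕ, (inner ℂ one ((T ^ n) one) : ℂ) = ∫ ξ, (conj ξ * z) ^ n ∂μγ := by
        intro n
        rw [hTdef, smul_pow, ContinuousLinearMap.smul_apply, inner_smul_right, hmom_neg n]
        have h1 : ∫ ξ, (conj ξ * z) ^ n ∂μγ = ∫ ξ, (conj ξ) ^ n * z ^ n ∂μγ := by
          simp_rw [mul_pow]
        rw [h1, integral_mul_const]
        ring
      have hKKγ : K = Kγ := by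
        rw [hKγdef, S6Aux.cauchy_series_lt μγ hμγc hlt, ← hKh.tsum_eq]
        exact tsum_congr hterm
      have heq : (1 - T) * (∑' n : ℕ, T ^ n) = 1 := mul_neg_geom_series T hT
      have heq2 : h - T h = one := by
        have h2 := congrArg (fun A : Lp ℂ 2 μ →L[ℂ] Lp ℂ 2 μ => A one) heq
        simpa [ContinuousLinearMap.mul_apply, ContinuousLinearMap.sub_apply,
          ContinuousLinearMap.one_apply, ← hhdef] using h2
      have hadj : (⇑(ContinuousLinearMap.adjoint U h) : ℂ → ℂ) =ᵐ[μ]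
          fun ξ => conj ξ * h ξ + ((conj γ - 1) * K) * conj ξ := by
        have h1 := S6Aux.adjoint_clark_ae Mxi one xibar γ hμc hMxi hone hxibar h
        rw [← hUdef] at h1
        exact h1
      have hcoe1 : (⇑(h - T h) : ℂ → ℂ) =ᵐ[μ] fun _ => (1:ℂ) := by
        rw [heq2]; exact hone
      have hpth : ∀ᵐ ξ ∂μ, h ξ = (1 - conj ξ * z)⁻¹
          + (z * ((conj γ - 1) * K)) * (conj ξ * (1 - conj ξ * z)⁻¹) := by
        have hTh : (⇑(T h) : ℂ → ℂ) =ᵐ[μ]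
            fun ξ => z * ((ContinuousLinearMap.adjoint U h) ξ) := by
          rw [hTdef, ContinuousLinearMap.smul_apply]
          filter_upwards [Lp.coeFn_smul z (ContinuousLinearMap.adjoint U h)] with ξ h1
          rw [h1, Pi.smul_apply, smul_eq_mul]
        filter_upwards [hcoe1, Lp.coeFn_sub h (T h), hTh, hadj, hμc] with ξ h1 h2 h3 h4 h5
        have hd := S6Aux.denom_ne hzabs h5
        have hE : h ξ - z * (conj ξ * h ξ + ((conj γ - 1) * K) * conj ξ) = 1 := by
          rw [← h4, ← h3]
          rw [h2] at h1
          simpa using h1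
        have h6 : h ξ = (1 + z * ((conj γ - 1) * K) * conj ξ) / (1 - conj ξ * z) := by
          rw [eq_div_iff hd]
          linear_combination hE
        rw [h6, div_eq_mul_inv]
        ring
      have hR1 : K = s + z * (conj γ - 1) * K * w := by
        have h1 : K = ∫ ξ, h ξ ∂μ := by rw [hKdef, S6Aux.inner_one_eq one hone h]
        have h2 : ∫ ξ, h ξ ∂μ = s + (z * ((conj γ - 1) * K)) * w := by
          rw [integral_congr_ae hpth,
            integral_add (S6Aux.int_g μ hμc hzabs)
              ((S6Aux.int_xbarg μ hμc hzabs).const_mul _),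
            integral_const_mul, ← hs, ← hw]
        rw [← h1] at h2
        linear_combination h2
      have e2 : z * w = s - 1 := by
        rw [hw, hs]; exact S6Aux.wrel μ hμc hzabs
      have e3 : z * Kξγ = K - 1 := by
        rw [hKKγ, hKξγdef, hKγdef]; exact S6Aux.wrel μγ hμγc hzabs
      rw [← hKKγ]
      refine mul_left_cancel₀ hz0 ?_
      linear_combination (-γ) * hR1 + (γ * K) * e2 - (γ * s) * e3 - (z * K * w) * hγγ
    · -- 1 < |z|
      have hz0' : z ≠ 0 := hz0
      have hT : ‖(z⁻¹ • U : Lp ℂ 2 μ →L[ℂ] Lp ℂ 2 μ)‖ < 1 := by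
        refine lt_of_le_of_lt (norm_smul_le z⁻¹ U) ?_
        have h1 : ‖z⁻¹‖ * ‖U‖ ≤ ‖z⁻¹‖ * 1 := mul_le_mul_of_nonneg_left hUnorm (norm_nonneg _)
        rw [mul_one] at h1
        refine lt_of_le_of_lt h1 ?_
        rw [Complex.norm_eq_abs, map_inv₀, inv_lt_one_iff₀]
        right; exact hgt
      set T : Lp ℂ 2 μ →L[ℂ] Lp ℂ 2 μ := z⁻¹ • U with hTdef
      have hsummable : Summable (fun n : ℕ => T ^ n) := summable_geometric_of_norm_lt_one hT
      set h : Lp ℂ 2 μ := (∑' n : ℕ, T ^ n) one with hhdef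
      have hSh : HasSum (fun n : ℕ => (T ^ n) one) h := by
        have h1 := hsummable.hasSum.mapL (ContinuousLinearMap.apply ℂ (Lp ℂ 2 μ) one)
        simpa using h1
      have hKh : HasSum (fun n : ℕ => (inner ℂ one ((T ^ n) one) : ℂ)) (inner ℂ one h : ℂ) := by
        have h1 := hSh.mapL (innerSL ℂ one)
        simpa using h1
      set K : ℂ := (inner ℂ one h : ℂ) with hKdef
      have hterm : ∀ n : ℕ, (inner ℂ one ((T ^ n) one) : ℂ) = ∫ ξ, (ξ * z⁻¹) ^ n ∂μγ := by
        intro n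
        rw [hTdef, smul_pow, ContinuousLinearMap.smul_apply, inner_smul_right, hmom_pos n]
        have h1 : ∫ ξ, (ξ * z⁻¹) ^ n ∂μγ = ∫ ξ, ξ ^ n * (z⁻¹) ^ n ∂μγ := by
          simp_rw [mul_pow]
        rw [h1, integral_mul_const]
        ring
      have hKKγ : Kγ = 1 - K := by
        rw [hKγdef, S6Aux.cauchy_series_gt μγ hμγc hgt]
        have h1 : K = ∑' n : ℕ, ∫ ξ, (ξ * z⁻¹) ^ n ∂μγ := by
          rw [← hKh.tsum_eq]; exact tsum_congr hterm
        rw [h1]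
      have heq : (1 - T) * (∑' n : ℕ, T ^ n) = 1 := mul_neg_geom_series T hT
      have heq2 : h - T h = one := by
        have h2 := congrArg (fun A : Lp ℂ 2 μ →L[ℂ] Lp ℂ 2 μ => A one) heq
        simpa [ContinuousLinearMap.mul_apply, ContinuousLinearMap.sub_apply,
          ContinuousLinearMap.one_apply, ← hhdef] using h2
      set p : ℂ := (inner ℂ xibar h : ℂ) with hpdef
      set m : ℂ := z + (γ - 1) * p with hmdef
      have hUh : (⇑(U h) : ℂ → ℂ) =ᵐ[μ] fun ξ => ξ * h ξ + ((γ - 1) * p) * 1 := by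
        have h1 := S6Aux.clark_coe Mxi one xibar γ hMxi hone h
        rw [← hUdef] at h1
        exact h1
      have hcoe1 : (⇑(h - T h) : ℂ → ℂ) =ᵐ[μ] fun _ => (1:ℂ) := by
        rw [heq2]; exact hone
      have hpt : ∀ᵐ ξ ∂μ, z * h ξ = m * (1 - (1 - conj ξ * z)⁻¹) := by
        have hTh : (⇑(T h) : ℂ → ℂ) =ᵐ[μ] fun ξ => z⁻¹ * ((U h) ξ) := by
          rw [hTdef, ContinuousLinearMap.smul_apply]
          filter_upwards [Lp.coeFn_smul z⁻¹ (U h)] with ξ h1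
          rw [h1, Pi.smul_apply, smul_eq_mul]
        filter_upwards [hcoe1, Lp.coeFn_sub h (T h), hTh, hUh, hμc] with ξ h1 h2 h3 h4 h5
        have hzz : z * z⁻¹ = 1 := mul_inv_cancel₀ hz0'
        have hE : h ξ - z⁻¹ * (ξ * h ξ + ((γ - 1) * p) * 1) = 1 := by
          rw [← h4, ← h3]
          rw [h2] at h1
          simpa using h1
        have hA : h ξ * (z - ξ) = m := by
          rw [hmdef]
          linear_combination z * hE + (ξ * h ξ + (γ - 1) * p) * hzz
        have hg3 := S6Aux.gid3 hzabs h5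
        linear_combination (1 - (1 - conj ξ * z)⁻¹) * hA - h ξ * hg3
      have hintxh : Integrable (fun ξ => ξ * h ξ) μ := by
        refine (L2.integrable_inner (𝕜 := ℂ) xibar h).congr ?_
        filter_upwards [hxibar] with ξ h1
        rw [RCLike.inner_apply', h1, Complex.conj_conj]
      have hG1 : z * K = m * (1 - s) := by
        have h1 : K = ∫ ξ, h ξ ∂μ := by rw [hKdef, S6Aux.inner_one_eq one hone h]
        rw [h1, ← integral_const_mul, integral_congr_ae hpt, integral_const_mul,
          integral_sub (integrable_const 1) (S6Aux.int_g μ hμc hzabs), integral_const,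
          probReal_univ, ← hs]
        simp
      have hZP : z * p = -(m * z * s) := by
        have h1 : p = ∫ ξ, ξ * h ξ ∂μ := by rw [hpdef, S6Aux.inner_xibar_eq xibar hxibar h]
        have h2 : ∀ᵐ ξ ∂μ, z * (ξ * h ξ) = -(m * z) * (1 - conj ξ * z)⁻¹ := by
          filter_upwards [hpt, hμc] with ξ h3 h4
          have hg2 := S6Aux.gid2 hzabs h4
          linear_combination ξ * h3 - m * hg2
        rw [h1, ← integral_const_mul, integral_congr_ae h2, integral_const_mul, ← hs]
        ring
      have e2 : z * w = s - 1 := by rw [hw, hs]; exact S6Aux.wrel μ hμc hzabs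
      have e3 : z * Kξγ = Kγ - 1 := by
        rw [hKξγdef, hKγdef]; exact S6Aux.wrel μγ hμγc hzabs
      refine mul_left_cancel₀ (mul_ne_zero hz0' (mul_ne_zero hz0' hz0')) ?_
      have hmm : m = z + (γ - 1) * p := hmdef
      linear_combination (z * z * Kγ) * e2 - (γ * z * z * s) * e3
        + ((s - 1 - γ * s) * z * z) * hKKγ + ((γ * s - s + 1) * z) * hG1
        - (s - 1) * z * hmm - (s - 1) * (γ - 1) * hZP

end
end

section
/- For any Borel probability measure ν on 𝕋, the normalized Cauchy transform z ↦ K(ξ̄ν)(z)/Kν(z) is well defined and complex differentiable at every point of the open unit disc 𝔻 (in particular Kν(z) ≠ 0 for z ∈ 𝔻), and it is bounded there: |K(ξ̄ν)(z)/Kν(z)| ≤ 1 for all z ∈ 𝔻. -/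
open MeasureTheory Filter ContinuousLinearMap
open scoped ENNReal Topology ComplexConjugate
open Metric
set_option maxHeartbeats 1000000

noncomputable section

theorem ae_sph (ν : Measure ℂ) (hν : ν (Metric.sphere (0:ℂ) 1)ᶜ = 0) :
    ∀ᵐ ξ ∂ν, ‖ξ‖ = 1 := by
  have hset : {a : ℂ | ¬ ‖a‖ = 1} = (sphere (0:ℂ) 1)ᶜ := by
    ext a; simp [mem_sphere_zero_iff_norm]
  rw [ae_iff, hset]; exact hν

theorem denom_lb (ξ w : ℂ) (hξ : ‖ξ‖ = 1) :
    1 - ‖w‖ ≤ ‖1 - conj ξ * w‖ := by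
  have h1 : ‖conj ξ * w‖ = ‖w‖ := by simp [norm_mul, hξ]
  calc 1 - ‖w‖ = ‖(1:ℂ)‖ - ‖conj ξ * w‖ := by
        simp [h1, hξ]
    _ ≤ ‖(1:ℂ) - conj ξ * w‖ := norm_sub_norm_le _ _
    _ = ‖1 - conj ξ * w‖ := rfl

theorem denom_ne (ξ w : ℂ) (hξ : ‖ξ‖ = 1) (hw : ‖w‖ < 1) :
    1 - conj ξ * w ≠ 0 := by
  intro h
  have := denom_lb ξ w hξ
  rw [h] at this; simp at this; linarith

theorem re_lb (u : ℂ) (r : ℝ) (hu : ‖u‖ ≤ r) (hr : r < 1) (hr0 : 0 ≤ r) :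
    1/2 + (1 - r^2)/8 ≤ ((1:ℂ)/(1-u)).re := by
  have hd : (1 : ℂ) - u ≠ 0 := by
    intro h
    have h1 : ‖u‖ < 1 := lt_of_le_of_lt hu hr
    rw [sub_eq_zero] at h
    simp [← h] at h1
  have hns : 0 < Complex.normSq (1 - u) := Complex.normSq_pos.mpr hd
  have hre : ((1:ℂ)/(1-u)).re = (1 - u.re) / Complex.normSq (1 - u) := by
    rw [one_div, Complex.inv_re]
    simp [Complex.sub_re]
  rw [hre]
  have habs : ‖1 - u‖ ≤ 2 := by
    calc ‖1 - u‖ = ‖(1:ℂ) - u‖ := rfl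
      _ ≤ ‖(1:ℂ)‖ + ‖u‖ := norm_sub_le _ _
      _ ≤ 2 := by simp; linarith
  have hns4 : Complex.normSq (1 - u) ≤ 4 := by
    nlinarith [Complex.sq_norm (1-u), norm_nonneg (1-u)]
  have hkey : 1 - Complex.normSq u = 2 * (1 - u.re) - Complex.normSq (1 - u) := by
    simp only [Complex.normSq_apply, Complex.sub_re, Complex.sub_im, Complex.one_re,
      Complex.one_im]
    ring
  have hnsu : Complex.normSq u ≤ r^2 := by
    nlinarith [Complex.sq_norm u, norm_nonneg u]
  rw [le_div_iff₀ hns]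
  nlinarith [mul_nonneg (by nlinarith : (0:ℝ) ≤ 1 - r^2)
    (by linarith : (0:ℝ) ≤ 4 - Complex.normSq (1-u))]

theorem integ_aux (ν : Measure ℂ) [IsProbabilityMeasure ν]
    (hsph : ∀ᵐ ξ ∂ν, ‖ξ‖ = 1) (f : ℂ → ℂ) (hfm : Measurable f)
    (hf1 : ∀ ξ, ‖ξ‖ = 1 → ‖f ξ‖ ≤ 1)
    (w : ℂ) (hw : ‖w‖ < 1) :
    Integrable (fun ξ => f ξ / (1 - conj ξ * w)) ν := by
  apply Integrable.mono' (integrable_const ((1 - ‖w‖)⁻¹))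
  · exact (hfm.div (measurable_const.sub ((Complex.continuous_conj.measurable.mul measurable_const)))).aestronglyMeasurable
  · filter_upwards [hsph] with ξ hξ
    have hdl := denom_lb ξ w hξ
    have hpos : (0:ℝ) < 1 - ‖w‖ := by linarith
    rw [norm_div]
    calc ‖f ξ‖ / ‖1 - conj ξ * w‖
        ≤ 1 / (1 - ‖w‖) := by
          apply div_le_div₀ (by linarith [hpos]) (hf1 ξ hξ) hpos hdl
      _ = (1 - ‖w‖)⁻¹ := one_div _

theorem cauchy_hasDeriv (ν : Measure ℂ) [IsProbabilityMeasure ν]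
    (hsph : ∀ᵐ ξ ∂ν, ‖ξ‖ = 1) (f : ℂ → ℂ) (hfm : Measurable f)
    (hf1 : ∀ ξ, ‖ξ‖ = 1 → ‖f ξ‖ ≤ 1)
    (z : ℂ) (hz : ‖z‖ < 1) :
    HasDerivAt (fun w => ∫ ξ, f ξ / (1 - conj ξ * w) ∂ν)
      (∫ ξ, f ξ * (conj ξ / (1 - conj ξ * z)^2) ∂ν) z := by
  set ε : ℝ := (1 - ‖z‖)/2 with hε
  set r : ℝ := (1 + ‖z‖)/2 with hrdef
  have hε_pos : 0 < ε := by have := norm_nonneg z; simp [hε]; linarith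
  have hr1 : r < 1 := by simp [hrdef]; linarith
  have hx_lt : ∀ x ∈ ball z ε, ‖x‖ < r := by
    intro x hx
    have : dist x z < ε := mem_ball.mp hx
    have h2 : ‖x - z‖ < ε := by rwa [Complex.dist_eq] at this
    calc ‖x‖ = ‖x - z + z‖ := by ring_nf
      _ ≤ ‖x - z‖ + ‖z‖ := norm_add_le _ _
      _ < ε + ‖z‖ := by linarith
      _ = r := by simp [hε, hrdef]; ring
  have h1r : (0:ℝ) < 1 - r := by linarith
  refine (hasDerivAt_integral_of_dominated_loc_of_deriv_le
    (F := fun w ξ => f ξ / (1 - conj ξ * w))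
    (F' := fun w ξ => f ξ * (conj ξ / (1 - conj ξ * w)^2))
    (bound := fun _ => ((1-r)^2)⁻¹) (ball_mem_nhds z hε_pos)
    (Eventually.of_forall fun x =>
      (hfm.div (measurable_const.sub ((Complex.continuous_conj.measurable.mul measurable_const)))).aestronglyMeasurable)
    (integ_aux ν hsph f hfm hf1 z hz)
    ((hfm.mul ((Complex.continuous_conj.measurable.div
      ((measurable_const.sub ((Complex.continuous_conj.measurable.mul measurable_const))).pow_const 2)))).aestronglyMeasurable)
    ?_ (integrable_const _) ?_).2
  · filter_upwards [hsph] with ξ hξ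
    intro x hx
    have hxr := hx_lt x hx
    have hdl : 1 - r ≤ ‖1 - conj ξ * x‖ := by
      have := denom_lb ξ x hξ; linarith
    rw [norm_mul, norm_div, norm_pow]
    have hcx : ‖conj ξ‖ = 1 := by rwa [Complex.norm_conj]
    rw [hcx]
    have hd2 : (1-r)^2 ≤ ‖1 - conj ξ * x‖ ^ 2 := by nlinarith
    calc ‖f ξ‖ * (1 / ‖1 - conj ξ * x‖^2)
        ≤ 1 * (((1-r)^2)⁻¹) := by
          apply mul_le_mul (hf1 ξ hξ) _ (by positivity) zero_le_one
          rw [one_div]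
          exact inv_anti₀ (by positivity) hd2
      _ = ((1-r)^2)⁻¹ := one_mul _
  · filter_upwards [hsph] with ξ hξ
    intro x hx
    have hne : 1 - conj ξ * x ≠ 0 := denom_ne ξ x hξ ((hx_lt x hx).trans hr1)
    have hmul : HasDerivAt (fun y : ℂ => conj ξ * y) (conj ξ) x := by
      simpa using (hasDerivAt_id x).const_mul (conj ξ)
    have hsub : HasDerivAt (fun y : ℂ => 1 - conj ξ * y) (-(conj ξ)) x := hmul.const_sub 1
    have hinv := hsub.inv hne
    have := hinv.const_mul (f ξ)
    simp only [div_eq_mul_inv]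
    convert this using 1
    · rfl
    · rfl
    · rw [neg_neg, div_eq_mul_inv]

theorem oneFun_meas : Measurable oneFun := measurable_const
theorem oneFun_bd : ∀ ξ : ℂ, ‖ξ‖ = 1 → ‖oneFun ξ‖ ≤ 1 := by
  intro ξ _; simp [oneFun]
theorem xibar_meas : Measurable xibarFun := Complex.continuous_conj.measurable
theorem xibar_bd : ∀ ξ : ℂ, ‖ξ‖ = 1 → ‖xibarFun ξ‖ ≤ 1 := by
  intro ξ hξ; simp [xibarFun, Complex.norm_conj, hξ]

theorem re_K (ν : Measure ℂ) [IsProbabilityMeasure ν]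
    (hsph : ∀ᵐ ξ ∂ν, ‖ξ‖ = 1) (w : ℂ) (hw : ‖w‖ < 1) :
    1/2 + (1 - (‖w‖)^2)/8 ≤ (cauchyT ν oneFun w).re := by
  have hint : Integrable (fun ξ => oneFun ξ / (1 - conj ξ * w)) ν :=
    integ_aux ν hsph oneFun oneFun_meas oneFun_bd w hw
  have hre : (cauchyT ν oneFun w).re = ∫ ξ, (oneFun ξ / (1 - conj ξ * w)).re ∂ν := by
    rw [cauchyT]; simpa using (integral_re hint).symm
  rw [hre]
  have hc : ∫ _ξ : ℂ, (1/2 + (1 - (‖w‖)^2)/8) ∂ν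
      = 1/2 + (1 - (‖w‖)^2)/8 := by
    simp [integral_const, measure_univ]
  rw [← hc]
  apply integral_mono_ae (integrable_const _) hint.re
  filter_upwards [hsph] with ξ hξ
  have hu : ‖conj ξ * w‖ ≤ ‖w‖ := by
    simp [norm_mul, Complex.norm_conj, hξ]
  simpa [oneFun] using re_lb (conj ξ * w) (‖w‖) hu hw (norm_nonneg w)

theorem K_ne (ν : Measure ℂ) [IsProbabilityMeasure ν]
    (hsph : ∀ᵐ ξ ∂ν, ‖ξ‖ = 1) (w : ℂ) (hw : ‖w‖ < 1) :
    cauchyT ν oneFun w ≠ 0 := by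
  intro h
  have h1 := re_K ν hsph w hw
  rw [h] at h1
  simp at h1
  nlinarith [Complex.sq_norm w, norm_nonneg w]

theorem K_zero (ν : Measure ℂ) [IsProbabilityMeasure ν] : cauchyT ν oneFun 0 = 1 := by
  simp [cauchyT, oneFun, integral_const, measure_univ]

theorem b_lt (ν : Measure ℂ) [IsProbabilityMeasure ν]
    (hsph : ∀ᵐ ξ ∂ν, ‖ξ‖ = 1) (w : ℂ) (hw : ‖w‖ < 1) :
    ‖(cauchyT ν oneFun w - 1) / cauchyT ν oneFun w‖ < 1 := by
  set K := cauchyT ν oneFun w with hK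
  have hKne : K ≠ 0 := K_ne ν hsph w hw
  have hre : 1/2 < K.re := by
    have := re_K ν hsph w hw
    nlinarith [Complex.sq_norm w, norm_nonneg w]
  have hlt : ‖K - 1‖ < ‖K‖ := by
    have h1 : Complex.normSq (K - 1) < Complex.normSq K := by
      simp only [Complex.normSq_apply, Complex.sub_re, Complex.sub_im, Complex.one_re,
        Complex.one_im]
      nlinarith
    have := Real.sqrt_lt_sqrt (Complex.normSq_nonneg _) h1
    simpa [Complex.norm_def] using this
  rw [norm_div]
  exact (div_lt_one (norm_pos_iff.mpr hKne)).mpr hlt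

theorem cauchy_ident (ν : Measure ℂ) [IsProbabilityMeasure ν]
    (hsph : ∀ᵐ ξ ∂ν, ‖ξ‖ = 1) (z : ℂ) (hz : ‖z‖ < 1) (hz0 : z ≠ 0) :
    cauchyT ν xibarFun z = (cauchyT ν oneFun z - 1) / z := by
  have h1 : Integrable (fun ξ => oneFun ξ / (1 - conj ξ * z)) ν :=
    integ_aux ν hsph oneFun oneFun_meas oneFun_bd z hz
  have h2 : ∀ᵐ ξ ∂ν, xibarFun ξ / (1 - conj ξ * z)
      = (oneFun ξ / (1 - conj ξ * z) - 1) / z := by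
    filter_upwards [hsph] with ξ hξ
    have hd := denom_ne ξ z hξ hz
    simp only [xibarFun, oneFun]
    field_simp
    ring
  rw [cauchyT, integral_congr_ae h2]
  have : ∫ ξ, (oneFun ξ / (1 - conj ξ * z) - 1) / z ∂ν
      = (∫ ξ, (oneFun ξ / (1 - conj ξ * z) - 1) ∂ν) / z := integral_div z _
  rw [this, integral_sub h1 (integrable_const 1)]
  simp [cauchyT, integral_const, measure_univ]


theorem statement7
    (ν : Measure ℂ) [IsProbabilityMeasure ν] (hν : ν (Metric.sphere (0:ℂ) 1)ᶜ = 0)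
    (z : ℂ) (hz : ‖z‖ < 1) :
    cauchyT ν oneFun z ≠ 0 ∧
    DifferentiableAt ℂ (fun w => cauchyT ν xibarFun w / cauchyT ν oneFun w) z ∧
    ‖cauchyT ν xibarFun z / cauchyT ν oneFun z‖ ≤ 1 := by
  have hsph := ae_sph ν hν
  have hKdiff : ∀ w, ‖w‖ < 1 → DifferentiableAt ℂ (cauchyT ν oneFun) w := by
    intro w hw
    exact (cauchy_hasDeriv ν hsph oneFun oneFun_meas oneFun_bd w hw).differentiableAt
  have hXdiff : DifferentiableAt ℂ (cauchyT ν xibarFun) z :=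
    (cauchy_hasDeriv ν hsph xibarFun xibar_meas xibar_bd z hz).differentiableAt
  have hKne := K_ne ν hsph z hz
  refine ⟨hKne, hXdiff.div (hKdiff z hz) hKne, ?_⟩
  -- Schwarz lemma: |b z| ≤ |z| with b w = (K w - 1)/K w
  have schwarz : ‖(cauchyT ν oneFun z - 1) / cauchyT ν oneFun z‖
      ≤ ‖z‖ := by
    refine Complex.norm_le_norm_of_mapsTo_ball (R := 1)
      (f := fun w => (cauchyT ν oneFun w - 1) / cauchyT ν oneFun w) ?_ ?_ ?_ hz
    · intro w hw
      rw [mem_ball_zero_iff] at hw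
      exact (((hKdiff w hw).sub (differentiableAt_const 1)).div (hKdiff w hw)
        (K_ne ν hsph w hw)).differentiableWithinAt
    · intro w hw
      rw [mem_ball_zero_iff] at hw
      rw [mem_closedBall_zero_iff]
      exact (b_lt ν hsph w hw).le
    · show (cauchyT ν oneFun 0 - 1) / cauchyT ν oneFun 0 = 0
      rw [K_zero ν]; simp
  by_cases hz0 : z = 0
  · subst hz0
    rw [K_zero ν, div_one]
    have : cauchyT ν xibarFun 0 = ∫ ξ, conj ξ ∂ν := by
      simp [cauchyT, xibarFun]
    rw [this]
    calc ‖∫ ξ, conj ξ ∂ν‖ ≤ ∫ ξ, ‖conj ξ‖ ∂ν := norm_integral_le_integral_norm _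
      _ = ∫ _ξ : ℂ, (1:ℝ) ∂ν := by
          apply integral_congr_ae
          filter_upwards [hsph] with ξ hξ
          simp [Complex.norm_conj, hξ]
      _ = 1 := by simp [integral_const, measure_univ]
  · rw [cauchy_ident ν hsph z hz hz0]
    have habs0 : 0 < ‖z‖ := by
      simpa using norm_pos_iff.mpr hz0
    have heq : (cauchyT ν oneFun z - 1) / z / cauchyT ν oneFun z
        = ((cauchyT ν oneFun z - 1) / cauchyT ν oneFun z) / z := by
      rw [div_div, div_div, mul_comm]
    rw [heq, norm_div, div_le_one habs0]
    exact schwarz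


end
end

section
/- Let ν be a Borel probability measure on 𝕋 and ζ ∈ 𝕋. If |Kν(rζ)| → ∞ as r → 1⁻, then the radial limit of the normalized Cauchy transform satisfies lim_{r→1⁻} K(ξ̄ν)(rζ)/Kν(rζ) = conj(ζ). -/
open MeasureTheory Filter ContinuousLinearMap
open scoped ENNReal Topology ComplexConjugate

noncomputable section

lemma key (ν : Measure ℂ) [IsProbabilityMeasure ν] (hν : ν (Metric.sphere (0:ℂ) 1)ᶜ = 0)
    (z : ℂ) (hz : z ≠ 0) (hz1 : ‖z‖ < 1) :
    cauchyT ν xibarFun z = z⁻¹ * (cauchyT ν oneFun z - 1) := by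
  have hae : ∀ᵐ ξ ∂ν, ‖ξ‖ = 1 := by
    rw [ae_iff]
    refine measure_mono_null (fun ξ hξ => ?_) hν
    simpa [Metric.mem_sphere, dist_eq_norm] using hξ
  have hne : ∀ ξ : ℂ, ‖ξ‖ = 1 → 1 - conj ξ * z ≠ 0 := by
    intro ξ hξ h
    have : ‖(1:ℂ)‖ = ‖conj ξ * z‖ := by rw [sub_eq_zero] at h; rw [h]
    simp [hξ] at this
    linarith
  have hmeas : AEStronglyMeasurable (fun ξ : ℂ => 1 / (1 - conj ξ * z)) ν := by
    apply Measurable.aestronglyMeasurable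
    exact measurable_const.div (((continuous_const.sub (Complex.continuous_conj.mul continuous_const)).measurable))
  have hint : Integrable (fun ξ : ℂ => 1 / (1 - conj ξ * z)) ν := by
    refine Integrable.mono' (integrable_const ((1 - ‖z‖)⁻¹)) hmeas ?_
    filter_upwards [hae] with ξ hξ
    rw [norm_div, norm_one, div_eq_mul_inv, one_mul]
    apply inv_anti₀ (by linarith)
    calc 1 - ‖z‖ = ‖(1:ℂ)‖ - ‖conj ξ * z‖ := by simp [hξ]
      _ ≤ ‖1 - conj ξ * z‖ := norm_sub_norm_le _ _
  have h1 : cauchyT ν xibarFun z = ∫ ξ, z⁻¹ * (1 / (1 - conj ξ * z) - 1) ∂ν := by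
    apply integral_congr_ae
    filter_upwards [hae] with ξ hξ
    have h := hne ξ hξ
    simp only [xibarFun]
    field_simp
    ring
  rw [h1, integral_const_mul, integral_sub hint (integrable_const 1), integral_const]
  simp [cauchyT, oneFun]

theorem statement8
    (ν : Measure ℂ) [IsProbabilityMeasure ν] (hν : ν (Metric.sphere (0:ℂ) 1)ᶜ = 0)
    (ζ : ℂ) (hζ : ‖ζ‖ = 1)
    (hblow : Tendsto (fun r : ℝ => ‖cauchyT ν oneFun ((r : ℂ) * ζ)‖)
      (𝓝[<] (1:ℝ)) atTop) :
    Tendsto (fun r : ℝ => cauchyT ν xibarFun ((r : ℂ) * ζ) / cauchyT ν oneFun ((r : ℂ) * ζ))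
      (𝓝[<] (1:ℝ)) (𝓝 (conj ζ)) := by
  have hζ0 : ζ ≠ 0 := by
    intro h; rw [h] at hζ; simp at hζ
  set K : ℝ → ℂ := fun r => cauchyT ν oneFun ((r : ℂ) * ζ) with hK
  have hKne : ∀ᶠ r in 𝓝[<] (1:ℝ), K r ≠ 0 := by
    filter_upwards [hblow.eventually_ge_atTop 1] with r hr h
    rw [show cauchyT ν oneFun ((r:ℂ) * ζ) = K r from rfl, h] at hr
    simp at hr
    linarith
  have hr01 : ∀ᶠ r in 𝓝[<] (1:ℝ), r ∈ Set.Ioo (0:ℝ) 1 := by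
    exact Ioo_mem_nhdsLT_of_mem (by simp : (1:ℝ) ∈ Set.Ioc (0:ℝ) 1)
  have hKinv : Tendsto (fun r => (K r)⁻¹) (𝓝[<] (1:ℝ)) (𝓝 0) := by
    rw [tendsto_zero_iff_norm_tendsto_zero]
    have := hblow.inv_tendsto_atTop
    refine this.congr fun r => ?_
    show ‖cauchyT ν oneFun ((r:ℂ) * ζ)‖⁻¹ = ‖(K r)⁻¹‖
    rw [norm_inv]
  have hzinv : Tendsto (fun r : ℝ => ((r:ℂ) * ζ)⁻¹) (𝓝[<] (1:ℝ)) (𝓝 ζ⁻¹) := by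
    have h1 : Tendsto (fun r : ℝ => (r:ℂ) * ζ) (𝓝[<] (1:ℝ)) (𝓝 ζ) := by
      have h2 : Tendsto (fun r : ℝ => (r:ℂ) * ζ) (𝓝 (1:ℝ)) (𝓝 (((1:ℝ):ℂ) * ζ)) :=
        (Complex.continuous_ofReal.tendsto 1).mul tendsto_const_nhds
      simpa using h2.mono_left nhdsWithin_le_nhds
    exact h1.inv₀ hζ0
  have hlim : Tendsto (fun r : ℝ => ((r:ℂ)*ζ)⁻¹ * (1 - (K r)⁻¹)) (𝓝[<] (1:ℝ)) (𝓝 (conj ζ)) := by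
    have : conj ζ = ζ⁻¹ * (1 - 0) := by
      rw [sub_zero, mul_one]
      apply eq_inv_of_mul_eq_one_left
      rw [mul_comm, Complex.mul_conj, Complex.normSq_eq_norm_sq, hζ]
      simp
    rw [this]
    exact hzinv.mul (tendsto_const_nhds.sub hKinv)
  refine hlim.congr' ?_
  filter_upwards [hKne, hr01] with r hne hr
  have hz0 : (r:ℂ) * ζ ≠ 0 := by
    simp only [ne_eq, mul_eq_zero, Complex.ofReal_eq_zero, not_or]
    exact ⟨ne_of_gt hr.1, hζ0⟩
  have hz1 : ‖(r:ℂ) * ζ‖ < 1 := by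
    rw [norm_mul, Complex.norm_real, hζ, mul_one,
      Real.norm_eq_abs, abs_of_pos hr.1]
    exact hr.2
  rw [key ν hν _ hz0 hz1]
  field_simp
  change (K r - 1) / r = K r * (K r - 1) / (r * K r)
  rw [mul_comm (r:ℂ), mul_div_mul_left _ _ hne]

end
end
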